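/- arXiv:1810.11532 — 9 statements merged into one kernel-verified Lean document; each statement's English description precedes it below -/
import Mathlib

section
/- Let L ≥ 1 and let R = [r_{i,j}] be an L×L upper triangular real matrix whose diagonal entries λ_1,…,λ_L (λ_k = r_{k,k}) are pairwise distinct, and let p_{i,j,k} (1 ≤ i,j,k ≤ L) be the power factors of R. Then for all e, p⁰ ∈ ℝᴸ and every t ≥ 1, eᵀ Rᵗ p⁰ = Σ_{k=1}^{L} Σ_{i=1}^{L} Σ_{j=i}^{L} e_i · p_{i,j,k} · p⁰_j · λ_k^{t−1}. -/
open Matrix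

/-- The power factors `p_{i,j,k}` of an (`0`-based, `ℕ`-indexed) upper triangular
matrix `a` with pairwise distinct diagonal entries. -/
noncomputable def powerFactor (a : ℕ → ℕ → ℝ) : ℕ → ℕ → ℕ → ℝ
  | i, j, k =>
    if i = j ∧ j = k then a j j
    else if hc : k < i ∨ j < k then 0
    else if hd : k < j then
      (∑ l ∈ (Finset.Ico k j).attach, powerFactor a i l.1 k * a l.1 j) / (a k k - a j j)
    else a i j - ∑ l ∈ (Finset.Ico i j).attach, powerFactor a i j l.1
  termination_by i j k => j + k
  decreasing_by
  · have := l.2; simp only [Finset.mem_Ico] at this; omega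
  · have := l.2; simp only [Finset.mem_Ico] at this; omega

lemma pf_zero (a : ℕ → ℕ → ℝ) {i j k : ℕ} (h : k < i ∨ j < k) : powerFactor a i j k = 0 := by
  rw [powerFactor]
  have h1 : ¬(i = j ∧ j = k) := by omega
  rw [if_neg h1, dif_pos h]

lemma pf_diag (a : ℕ → ℕ → ℝ) (i : ℕ) : powerFactor a i i i = a i i := by
  rw [powerFactor]; simp

lemma pf_rec (a : ℕ → ℕ → ℝ) {i j k : ℕ} (hik : i ≤ k) (hkj : k < j) :
    powerFactor a i j k
      = (∑ l ∈ Finset.Ico k j, powerFactor a i l k * a l j) / (a k k - a j j) := by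
  rw [powerFactor]
  have h1 : ¬(i = j ∧ j = k) := by omega
  have h2 : ¬(k < i ∨ j < k) := by omega
  rw [if_neg h1, dif_neg h2, dif_pos hkj,
    Finset.sum_attach (Finset.Ico k j) (fun l => powerFactor a i l k * a l j)]

lemma pf_last (a : ℕ → ℕ → ℝ) {i j : ℕ} (hij : i < j) :
    powerFactor a i j j = a i j - ∑ l ∈ Finset.Ico i j, powerFactor a i j l := by
  rw [powerFactor]
  have h1 : ¬(i = j ∧ j = j) := by omega
  have h2 : ¬(j < i ∨ j < j) := by omega
  rw [if_neg h1, dif_neg h2, dif_neg (lt_irrefl j),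
    Finset.sum_attach (Finset.Ico i j) (fun l => powerFactor a i j l)]

lemma pf_eigen (a : ℕ → ℕ → ℝ) (L : ℕ)
    (htri : ∀ i j : ℕ, i < L → j < L → j < i → a i j = 0)
    (hne : ∀ i j : ℕ, i < L → j < L → i ≠ j → a i i ≠ a j j)
    {i j k : ℕ} (hi : i < L) (hj : j < L) (hk : k < L) :
    ∑ l ∈ Finset.range L, powerFactor a i l k * a l j
      = a k k * powerFactor a i j k := by
  rcases lt_trichotomy j k with hjk | rfl | hkj
  · rw [pf_zero a (Or.inr hjk), mul_zero]
    refine Finset.sum_eq_zero fun l hl => ?_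
    simp only [Finset.mem_range] at hl
    rcases lt_or_ge l k with h | h
    · rw [pf_zero a (Or.inr h), zero_mul]
    · rw [htri l j hl hj (lt_of_lt_of_le hjk h), mul_zero]
  · rw [Finset.sum_eq_single j]
    · ring
    · intro l hl hlj
      simp only [Finset.mem_range] at hl
      rcases lt_or_ge l j with h | h
      · rw [pf_zero a (Or.inr h), zero_mul]
      · rw [htri l j hl hj (lt_of_le_of_ne h (Ne.symm hlj)), mul_zero]
    · intro h; exact absurd (Finset.mem_range.mpr hj) h
  · rcases lt_or_ge k i with hki | hik
    · rw [pf_zero a (Or.inl hki), mul_zero]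
      refine Finset.sum_eq_zero fun l hl => ?_
      rw [pf_zero a (Or.inl hki), zero_mul]
    · -- i ≤ k < j
      have hsub : Finset.Ico k (j+1) ⊆ Finset.range L := by
        intro x hx
        simp only [Finset.mem_Ico] at hx
        exact Finset.mem_range.mpr (by omega)
      have hzero : ∀ x ∈ Finset.range L, x ∉ Finset.Ico k (j+1) →
          powerFactor a i x k * a x j = 0 := by
        intro x hx hx'
        simp only [Finset.mem_range] at hx
        simp only [Finset.mem_Ico, not_and, not_lt] at hx'
        rcases lt_or_ge x k with h | h
        · rw [pf_zero a (Or.inr h), zero_mul]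
        · rw [htri x j hx hj (by omega), mul_zero]
      rw [← Finset.sum_subset hsub hzero,
        Finset.sum_Ico_succ_top (le_of_lt hkj)]
      have hne' : a k k - a j j ≠ 0 :=
        sub_ne_zero_of_ne (hne k j hk hj (Nat.ne_of_lt hkj))
      rw [pf_rec a hik hkj]
      field_simp
      ring

lemma pf_rowsum (a : ℕ → ℕ → ℝ) (L : ℕ)
    (htri : ∀ i j : ℕ, i < L → j < L → j < i → a i j = 0)
    {i j : ℕ} (hi : i < L) (hj : j < L) :
    ∑ k ∈ Finset.range L, powerFactor a i j k = a i j := by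
  rcases lt_trichotomy j i with hji | rfl | hij
  · rw [htri i j hi hj hji]
    exact Finset.sum_eq_zero fun k _ => pf_zero a (by omega)
  · rw [Finset.sum_eq_single j]
    · exact pf_diag a j
    · intro k _ hk
      exact pf_zero a (by omega)
    · intro h; exact absurd (Finset.mem_range.mpr hj) h
  · have hsub : Finset.Ico i (j+1) ⊆ Finset.range L := by
      intro x hx
      simp only [Finset.mem_Ico] at hx
      exact Finset.mem_range.mpr (by omega)
    have hzero : ∀ x ∈ Finset.range L, x ∉ Finset.Ico i (j+1) →
        powerFactor a i j x = 0 := by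
      intro x hx hx'
      simp only [Finset.mem_Ico, not_and, not_lt] at hx'
      exact pf_zero a (by omega)
    rw [← Finset.sum_subset hsub hzero,
      Finset.sum_Ico_succ_top (le_of_lt hij), pf_last a hij]
    ring

/-- exact error expression for an upper triangular matrix with
pairwise distinct diagonal entries, via its power factors. -/
theorem stmt_5 (L : ℕ) (hL : 1 ≤ L)
    (R : Matrix (Fin L) (Fin L) ℝ)
    (hRtri : ∀ i j : Fin L, j < i → R i j = 0)
    (hdiag : ∀ i j : Fin L, i ≠ j → R i i ≠ R j j)
    (A : ℕ → ℕ → ℝ) (hA : ∀ i j : Fin L, A (i : ℕ) (j : ℕ) = R i j)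
    (e p0 : Fin L → ℝ) :
    ∀ t : ℕ, 1 ≤ t → e ⬝ᵥ ((R ^ t) *ᵥ p0)
      = ∑ k : Fin L, ∑ i : Fin L, ∑ j ∈ Finset.Ici i,
          e i * powerFactor A (i : ℕ) (j : ℕ) (k : ℕ) * p0 j * (R k k) ^ (t - 1) := by
  have htri : ∀ i j : ℕ, i < L → j < L → j < i → A i j = 0 := by
    intro i j hi hj hji
    rw [hA ⟨i, hi⟩ ⟨j, hj⟩]
    exact hRtri ⟨i, hi⟩ ⟨j, hj⟩ hji
  have hne : ∀ i j : ℕ, i < L → j < L → i ≠ j → A i i ≠ A j j := by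
    intro i j hi hj hij
    rw [hA ⟨i, hi⟩ ⟨i, hi⟩, hA ⟨j, hj⟩ ⟨j, hj⟩]
    exact hdiag ⟨i, hi⟩ ⟨j, hj⟩ (Fin.ne_of_val_ne hij)
  have heig : ∀ i j k : Fin L,
      ∑ l : Fin L, powerFactor A (i : ℕ) (l : ℕ) (k : ℕ) * R l j
        = R k k * powerFactor A (i : ℕ) (j : ℕ) (k : ℕ) := by
    intro i j k
    have h1 : ∀ l : Fin L, powerFactor A (i : ℕ) (l : ℕ) (k : ℕ) * R l j
        = powerFactor A (i : ℕ) (l : ℕ) (k : ℕ) * A (l : ℕ) (j : ℕ) :=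
      fun l => by rw [hA]
    rw [Finset.sum_congr rfl fun l _ => h1 l,
      Fin.sum_univ_eq_sum_range (fun l => powerFactor A (i : ℕ) l (k : ℕ) * A l (j : ℕ)) L,
      pf_eigen A L htri hne i.isLt j.isLt k.isLt, hA]
  have key : ∀ s : ℕ, ∀ i j : Fin L,
      (R ^ (s + 1)) i j
        = ∑ k : Fin L, powerFactor A (i : ℕ) (j : ℕ) (k : ℕ) * (R k k) ^ s := by
    intro s
    induction s with
    | zero =>
      intro i j
      simp only [zero_add, pow_one, pow_zero, mul_one]
      rw [Fin.sum_univ_eq_sum_range (fun k => powerFactor A (i : ℕ) (j : ℕ) k) L,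
        pf_rowsum A L htri i.isLt j.isLt, hA]
    | succ s ih =>
      intro i j
      rw [pow_succ, Matrix.mul_apply]
      calc ∑ l : Fin L, (R ^ (s + 1)) i l * R l j
          = ∑ l : Fin L, ∑ k : Fin L,
              powerFactor A (i : ℕ) (l : ℕ) (k : ℕ) * (R k k) ^ s * R l j := by
            refine Finset.sum_congr rfl fun l _ => ?_
            rw [ih i l, Finset.sum_mul]
        _ = ∑ k : Fin L, ∑ l : Fin L,
              powerFactor A (i : ℕ) (l : ℕ) (k : ℕ) * (R k k) ^ s * R l j :=
            Finset.sum_comm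
        _ = ∑ k : Fin L,
              (∑ l : Fin L, powerFactor A (i : ℕ) (l : ℕ) (k : ℕ) * R l j) * (R k k) ^ s := by
            refine Finset.sum_congr rfl fun k _ => ?_
            rw [Finset.sum_mul]
            exact Finset.sum_congr rfl fun l _ => by ring
        _ = ∑ k : Fin L, powerFactor A (i : ℕ) (j : ℕ) (k : ℕ) * (R k k) ^ (s + 1) := by
            refine Finset.sum_congr rfl fun k _ => ?_
            rw [heig i j k]
            ring
  intro t ht
  obtain ⟨s, rfl⟩ : ∃ s, t = s + 1 := ⟨t - 1, by omega⟩
  simp only [Nat.add_sub_cancel]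
  calc e ⬝ᵥ ((R ^ (s + 1)) *ᵥ p0)
      = ∑ i : Fin L, ∑ j : Fin L, ∑ k : Fin L,
          e i * powerFactor A (i : ℕ) (j : ℕ) (k : ℕ) * p0 j * (R k k) ^ s := by
        rw [dotProduct]
        refine Finset.sum_congr rfl fun i _ => ?_
        simp only [Matrix.mulVec, dotProduct]
        rw [Finset.mul_sum]
        refine Finset.sum_congr rfl fun j _ => ?_
        rw [key s i j, Finset.sum_mul, Finset.mul_sum]
        exact Finset.sum_congr rfl fun k _ => by ring
    _ = ∑ k : Fin L, ∑ i : Fin L, ∑ j : Fin L,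
          e i * powerFactor A (i : ℕ) (j : ℕ) (k : ℕ) * p0 j * (R k k) ^ s := by
        rw [Finset.sum_congr rfl fun i (_ : i ∈ Finset.univ) =>
          (Finset.sum_comm : (∑ j : Fin L, ∑ k : Fin L,
            e i * powerFactor A (i : ℕ) (j : ℕ) (k : ℕ) * p0 j * (R k k) ^ s) = _)]
        exact Finset.sum_comm
    _ = ∑ k : Fin L, ∑ i : Fin L, ∑ j ∈ Finset.Ici i,
          e i * powerFactor A (i : ℕ) (j : ℕ) (k : ℕ) * p0 j * (R k k) ^ s := by
        refine Finset.sum_congr rfl fun k _ => Finset.sum_congr rfl fun i _ => ?_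
        refine (Finset.sum_subset (Finset.subset_univ _) fun j _ hj => ?_).symm
        have h' : ¬ i ≤ j := fun h => hj (Finset.mem_Ici.mpr h)
        have hji : (j : ℕ) < (i : ℕ) := Fin.lt_def.mp (lt_of_not_ge h')
        rw [pf_zero A (by omega)]
        ring
end

section
/- Let L ≥ 1 and let T = [t_{i,j}] be an L×L upper triangular complex matrix with diagonal entries λ_i = t_{i,i}. Then for every t ≥ 1 and all indices 1 ≤ i, j ≤ L: (a) the (i,i) entry of Tᵗ equals λ_iᵗ; (b) the (i,j) entry of Tᵗ is 0 when i > j; and (c) when i < j, the (i,j) entry of Tᵗ equals Σ_{m=1}^{j−i} Σ_{α} ( (Π_{l=1}^{m} t_{α_l, α_{l+1}}) · Σ_{β} Π_{k=1}^{m+1} λ_{α_k}^{β_k} ), where the middle sum ranges over all strictly increasing integer sequences i = α_1 < α_2 < … < α_{m+1} = j, and the inner sum ranges over all (m+1)-tuples of nonnegative integers (β_1,…,β_{m+1}) with β_1 + … + β_{m+1} = t − m (this inner sum being empty, hence 0, when t < m). -/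
open Matrix Finset

namespace Stmt6Aux

variable {L : ℕ}

noncomputable def S (T : Matrix (Fin L) (Fin L) ℂ) (m b : ℕ) (α : Fin (m + 1) → Fin L) : ℂ :=
  ∑ β ∈ Finset.Nat.antidiagonalTuple (m + 1) b, ∏ kk : Fin (m + 1), (T (α kk) (α kk)) ^ β kk

noncomputable def P (T : Matrix (Fin L) (Fin L) ℂ) (m : ℕ) (α : Fin (m + 1) → Fin L) : ℂ :=
  ∏ l : Fin m, T (α l.castSucc) (α l.succ)

noncomputable def G (T : Matrix (Fin L) (Fin L) ℂ) (t m : ℕ) (i j : Fin L) : ℂ :=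
  ∑ α : Fin (m + 1) → Fin L,
    if (∀ a b : Fin (m + 1), a < b → α a < α b) ∧ α 0 = i ∧ α (Fin.last m) = j
    then P T m α * (if m ≤ t then S T m (t - m) α else 0)
    else 0


lemma hsplit (k n : ℕ) (c : Fin (k + 1) → ℂ) :
    ∑ β ∈ Finset.Nat.antidiagonalTuple (k + 1) n, ∏ i, c i ^ β i
      = (∑ β ∈ Finset.Nat.antidiagonalTuple k n, ∏ i : Fin k, c i.succ ^ β i)
        + (if 1 ≤ n then
            c 0 * ∑ β ∈ Finset.Nat.antidiagonalTuple (k + 1) (n - 1), ∏ i, c i ^ β i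
           else 0) := by
  classical
  rw [← Finset.sum_filter_add_sum_filter_not (Finset.Nat.antidiagonalTuple (k + 1) n)
      (fun β => β 0 = 0)]
  congr 1
  · refine Finset.sum_nbij' (i := fun β => Fin.tail β) (j := fun β => Fin.cons 0 β)
      ?_ ?_ ?_ ?_ ?_
    · intro β hβ
      simp only [Finset.mem_filter, Finset.Nat.mem_antidiagonalTuple] at hβ ⊢
      rw [Fin.sum_univ_succ] at hβ
      have := hβ.1
      have h0 := hβ.2
      simp only [Fin.tail]
      omega
    · intro β hβ
      simp only [Finset.Nat.mem_antidiagonalTuple] at hβ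
      simp only [Finset.mem_filter, Finset.Nat.mem_antidiagonalTuple]
      constructor
      · rw [Fin.sum_univ_succ]
        simpa using hβ
      · simp
    · intro β hβ
      simp only [Finset.mem_filter] at hβ
      rw [← hβ.2]
      exact Fin.cons_self_tail β
    · intro β hβ
      exact Fin.tail_cons _ _
    · intro β hβ
      simp only [Finset.mem_filter] at hβ
      rw [Fin.prod_univ_succ, hβ.2, pow_zero, one_mul]
      rfl
  · cases n with
    | zero =>
      rw [if_neg (by omega)]
      rw [Finset.Nat.antidiagonalTuple_zero_right]
      rw [Finset.filter_singleton]
      simp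
    | succ n' =>
      rw [if_pos (by omega), Finset.mul_sum]
      have hn : n' + 1 - 1 = n' := rfl
      rw [hn]
      refine Finset.sum_nbij' (i := fun β => Fin.cons (β 0 - 1) (Fin.tail β))
        (j := fun β => Fin.cons (β 0 + 1) (Fin.tail β)) ?_ ?_ ?_ ?_ ?_
      · intro β hβ
        simp only [Finset.mem_filter, Finset.Nat.mem_antidiagonalTuple] at hβ
        rw [Finset.Nat.mem_antidiagonalTuple, Fin.sum_univ_succ, Fin.cons_zero]
        rw [Fin.sum_univ_succ] at hβ
        have h2 := hβ.2
        have h1 := hβ.1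
        have : ∑ i : Fin k, Fin.cons (β 0 - 1) (Fin.tail β) i.succ = ∑ i : Fin k, β i.succ := by
          refine Finset.sum_congr rfl fun i _ => ?_
          rw [Fin.cons_succ]; rfl
        omega
      · intro β hβ
        rw [Finset.Nat.mem_antidiagonalTuple, Fin.sum_univ_succ] at hβ
        simp only [Finset.mem_filter, Finset.Nat.mem_antidiagonalTuple]
        constructor
        · rw [Fin.sum_univ_succ, Fin.cons_zero]
          have : ∑ i : Fin k, Fin.cons (β 0 + 1) (Fin.tail β) i.succ = ∑ i : Fin k, β i.succ := by
            refine Finset.sum_congr rfl fun i _ => ?_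
            rw [Fin.cons_succ]; rfl
          omega
        · simp
      · intro β hβ
        simp only [Finset.mem_filter] at hβ
        have h0 : β 0 ≠ 0 := hβ.2
        rw [Fin.cons_zero, Fin.tail_cons]
        have : β 0 - 1 + 1 = β 0 := by omega
        rw [this, Fin.cons_self_tail]
      · intro β hβ
        rw [Fin.cons_zero, Fin.tail_cons]
        have : β 0 + 1 - 1 = β 0 := by omega
        rw [this, Fin.cons_self_tail]
      · intro β hβ
        simp only [Finset.mem_filter] at hβ
        have h0 : β 0 ≠ 0 := hβ.2
        rw [Fin.prod_univ_succ, Fin.prod_univ_succ, Fin.cons_zero]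
        have hcons : ∀ i : Fin k, Fin.cons (β 0 - 1) (Fin.tail β) i.succ = β i.succ := by
          intro i; rw [Fin.cons_succ]; rfl
        have hprod : (∏ i : Fin k, c i.succ ^ Fin.cons (β 0 - 1) (Fin.tail β) i.succ)
            = ∏ i : Fin k, c i.succ ^ β i.succ := by
          refine Finset.prod_congr rfl fun i _ => by rw [hcons]
        rw [hprod, ← mul_assoc, ← pow_succ']
        congr 2
        omega


lemma strictMono_cons_iff {m : ℕ} {x : Fin L} {α : Fin (m + 1) → Fin L} :
    StrictMono (Fin.cons x α : Fin (m + 2) → Fin L) ↔ x < α 0 ∧ StrictMono α := by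
  rw [Fin.strictMono_iff_lt_succ, Fin.strictMono_iff_lt_succ]
  constructor
  · intro h
    refine ⟨by simpa using h 0, fun i => ?_⟩
    have := h i.succ
    rwa [← Fin.succ_castSucc, Fin.cons_succ, Fin.cons_succ] at this
  · rintro ⟨h0, h⟩ i
    induction i using Fin.cases with
    | zero => simpa using h0
    | succ i =>
      rw [← Fin.succ_castSucc, Fin.cons_succ, Fin.cons_succ]
      exact h i

lemma sum_cons_decomp {m : ℕ} (f : (Fin (m + 1) → Fin L) → ℂ) :
    ∑ α : Fin (m + 1) → Fin L, f α
      = ∑ x : Fin L, ∑ α' : Fin m → Fin L, f (Fin.cons x α') := by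
  rw [← Equiv.sum_comp (Fin.consEquiv (fun _ => Fin L)) f, Fintype.sum_prod_type]
  rfl

lemma P_cons (T : Matrix (Fin L) (Fin L) ℂ) {m : ℕ} (x : Fin L) (α : Fin (m + 1) → Fin L) :
    (∏ l : Fin (m + 1), T ((Fin.cons x α : Fin (m + 2) → Fin L) l.castSucc)
        ((Fin.cons x α : Fin (m + 2) → Fin L) l.succ))
      = T x (α 0) * ∏ l : Fin m, T (α l.castSucc) (α l.succ) := by
  rw [Fin.prod_univ_succ]
  congr 1

lemma cons_last {m : ℕ} (x : Fin L) (α : Fin (m + 1) → Fin L) :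
    (Fin.cons x α : Fin (m + 2) → Fin L) (Fin.last (m + 1)) = α (Fin.last m) := by
  rw [← Fin.succ_last, Fin.cons_succ]

lemma mono_val_add {m : ℕ} {α : Fin (m + 1) → Fin L} (h : StrictMono α) :
    (α 0 : ℕ) + m ≤ (α (Fin.last m) : ℕ) := by
  have key : ∀ c : Fin (m + 1), (α 0 : ℕ) + (c : ℕ) ≤ (α c : ℕ) := by
    intro c
    induction c using Fin.induction with
    | zero => simp
    | succ i ih =>
      have h2 : (α i.castSucc : ℕ) < (α i.succ : ℕ) := h Fin.castSucc_lt_succ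
      have h3 : (i.castSucc : ℕ) = (i : ℕ) := rfl
      have h4 : ((i.succ : Fin (m + 1)) : ℕ) = (i : ℕ) + 1 := rfl
      omega
  simpa using key (Fin.last m)

lemma G_lt {T : Matrix (Fin L) (Fin L) ℂ} {t m : ℕ} {i j : Fin L}
    (h : (j : ℕ) < (i : ℕ) + m) : G T t m i j = 0 := by
  refine Finset.sum_eq_zero fun α _ => ?_
  split_ifs with h1 h2
  · exfalso
    have hm : StrictMono α := fun a b hab => h1.1 a b hab
    have := mono_val_add hm
    rw [h1.2.1, h1.2.2] at this
    omega
  · exfalso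
    have hm : StrictMono α := fun a b hab => h1.1 a b hab
    have := mono_val_add hm
    rw [h1.2.1, h1.2.2] at this
    omega
  · rfl

lemma G_gt {T : Matrix (Fin L) (Fin L) ℂ} {t m : ℕ} {i j : Fin L}
    (h : t < m) : G T t m i j = 0 := by
  refine Finset.sum_eq_zero fun α _ => ?_
  split_ifs with h1 h2
  · omega
  · exact mul_zero _
  · rfl

lemma G_zero (T : Matrix (Fin L) (Fin L) ℂ) (t : ℕ) (i j : Fin L) :
    G T t 0 i j = if i = j then (T i i) ^ t else 0 := by
  classical
  unfold G
  rw [← Equiv.sum_comp (Equiv.funUnique (Fin 1) (Fin L)).symm]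
  have hconst : ∀ x : Fin L,
      ((Equiv.funUnique (Fin 1) (Fin L)).symm x : Fin 1 → Fin L) = fun _ => x := fun x => rfl
  have step : ∀ x : Fin L,
      (if (∀ a b : Fin 1, a < b → (fun _ => x) a < (fun _ => x) b) ∧
          (fun _ : Fin 1 => x) 0 = i ∧ (fun _ : Fin 1 => x) (Fin.last 0) = j
       then P T 0 (fun _ => x) * (if 0 ≤ t then S T 0 (t - 0) (fun _ => x) else 0)
       else 0) = if x = i ∧ x = j then (T x x) ^ t else 0 := by
    intro x
    have hS : S T 0 (t - 0) (fun _ => x) = (T x x) ^ t := by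
      unfold S
      rw [Finset.Nat.antidiagonalTuple_one, Finset.sum_singleton, Fin.prod_univ_one]
      simp
    have hP : P T 0 (fun _ => x) = 1 := by
      unfold P; exact Finset.prod_empty
    by_cases hx : x = i ∧ x = j
    · rw [if_pos ⟨fun a b hab => absurd hab (by omega), hx.1, hx.2⟩, if_pos hx, hP, hS,
        if_pos (Nat.zero_le t), one_mul]
    · rw [if_neg, if_neg hx]
      intro hc
      exact hx ⟨hc.2.1, hc.2.2⟩
  calc (∑ x : Fin L, _) = ∑ x : Fin L, if x = i ∧ x = j then (T x x) ^ t else 0 := by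
        refine Finset.sum_congr rfl fun x _ => ?_
        rw [hconst x]
        exact step x
    _ = if i = j then (T i i) ^ t else 0 := by
        rw [Fintype.sum_eq_single i]
        · by_cases hij : i = j
          · rw [if_pos ⟨rfl, hij⟩, if_pos hij]
          · rw [if_neg (fun hc => hij hc.2), if_neg hij]
        · intro x hx
          rw [if_neg (fun hc => hx hc.1)]


lemma S_rec (T : Matrix (Fin L) (Fin L) ℂ) {m : ℕ} (b : ℕ) (α : Fin (m + 2) → Fin L) :
    S T (m + 1) b α
      = S T m b (Fin.tail α)
        + (if 1 ≤ b then T (α 0) (α 0) * S T (m + 1) (b - 1) α else 0) := by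
  have := hsplit (m + 1) b (fun kk => T (α kk) (α kk))
  unfold S
  convert this using 3
  rfl

lemma cond_iff {m : ℕ} (α : Fin (m + 1) → Fin L) :
    (∀ a b : Fin (m + 1), a < b → α a < α b) ↔ StrictMono α :=
  ⟨fun h a b hab => h a b hab, fun h a b hab => h hab⟩

lemma Grec (T : Matrix (Fin L) (Fin L) ℂ) (t m : ℕ) (i j : Fin L) :
    G T (t + 1) (m + 1) i j
      = T i i * G T t (m + 1) i j
        + ∑ k : Fin L, (if i < k then T i k * G T t m k j else 0) := by
  classical
  by_cases htm : m ≤ t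
  case neg =>
    rw [G_gt (show t + 1 < m + 1 by omega), G_gt (show t < m + 1 by omega), mul_zero, zero_add]
    refine (Finset.sum_eq_zero fun k _ => ?_).symm
    split_ifs with h
    · rw [G_gt (show t < m by omega), mul_zero]
    · rfl
  case pos =>
    -- rewrite each LHS summand using S_rec and split
    have lhs_eq : G T (t + 1) (m + 1) i j
        = (∑ α : Fin (m + 2) → Fin L,
            if (∀ a b : Fin (m + 2), a < b → α a < α b) ∧ α 0 = i ∧ α (Fin.last (m + 1)) = j
            then P T (m + 1) α * S T m (t - m) (Fin.tail α) else 0)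
          + ∑ α : Fin (m + 2) → Fin L,
            if (∀ a b : Fin (m + 2), a < b → α a < α b) ∧ α 0 = i ∧ α (Fin.last (m + 1)) = j
            then P T (m + 1) α *
              (if 1 ≤ t - m then T (α 0) (α 0) * S T (m + 1) (t - m - 1) α else 0) else 0 := by
      rw [G, ← Finset.sum_add_distrib]
      refine Finset.sum_congr rfl fun α _ => ?_
      by_cases hc : (∀ a b : Fin (m + 2), a < b → α a < α b) ∧ α 0 = i ∧ α (Fin.last (m + 1)) = j
      · rw [if_pos hc, if_pos hc, if_pos hc, if_pos (show m + 1 ≤ t + 1 by omega),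
          show t + 1 - (m + 1) = t - m from by omega, S_rec, mul_add]
      · rw [if_neg hc, if_neg hc, if_neg hc, add_zero]
    rw [lhs_eq]
    rw [add_comm (T i i * G T t (m + 1) i j)]
    congr 1
    · -- A-term = jump part
      rw [sum_cons_decomp (fun α => if (∀ a b : Fin (m + 2), a < b → α a < α b) ∧
            α 0 = i ∧ α (Fin.last (m + 1)) = j
          then P T (m + 1) α * S T m (t - m) (Fin.tail α) else 0)]
      rw [Fintype.sum_eq_single i]
      · -- x = i term
        have key : ∀ α' : Fin (m + 1) → Fin L,
            (if (∀ a b : Fin (m + 2), a < b → (Fin.cons i α' : Fin (m+2) → Fin L) a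
                  < (Fin.cons i α' : Fin (m+2) → Fin L) b) ∧
                (Fin.cons i α' : Fin (m+2) → Fin L) 0 = i ∧
                (Fin.cons i α' : Fin (m+2) → Fin L) (Fin.last (m + 1)) = j
             then P T (m + 1) (Fin.cons i α') * S T m (t - m) (Fin.tail ((Fin.cons i α') : Fin (m+2) → Fin L)) else 0)
            = (if i < α' 0 ∧ StrictMono α' ∧ α' (Fin.last m) = j
               then T i (α' 0) * (P T m α' * S T m (t - m) α') else 0) := by
          intro α'
          rw [Fin.tail_cons]
          have hiff : ((∀ a b : Fin (m + 2), a < b → (Fin.cons i α' : Fin (m+2) → Fin L) a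
                  < (Fin.cons i α' : Fin (m+2) → Fin L) b) ∧
                (Fin.cons i α' : Fin (m+2) → Fin L) 0 = i ∧
                (Fin.cons i α' : Fin (m+2) → Fin L) (Fin.last (m + 1)) = j)
              ↔ (i < α' 0 ∧ StrictMono α' ∧ α' (Fin.last m) = j) := by
            rw [cond_iff, strictMono_cons_iff, Fin.cons_zero, cons_last]
            constructor
            · rintro ⟨⟨h1, h2⟩, _, h4⟩; exact ⟨h1, h2, h4⟩
            · rintro ⟨h1, h2, h4⟩; exact ⟨⟨h1, h2⟩, rfl, h4⟩
          rw [if_congr hiff rfl rfl]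
          split_ifs with hc
          · rw [show P T (m + 1) (Fin.cons i α') = T i (α' 0) * P T m α' from P_cons T i α',
              mul_assoc]
          · rfl
        rw [Finset.sum_congr rfl fun α' _ => key α']
        -- now match with the k-sum
        have rhs_eq : ∀ k : Fin L,
            (if i < k then T i k * G T t m k j else 0)
            = ∑ α' : Fin (m + 1) → Fin L,
                if i < k ∧ (StrictMono α' ∧ α' 0 = k ∧ α' (Fin.last m) = j)
                then T i k * (P T m α' * S T m (t - m) α') else 0 := by
          intro k
          split_ifs with hk
          · rw [G, Finset.mul_sum]
            refine Finset.sum_congr rfl fun α' _ => ?_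
            by_cases hc' : (∀ a b : Fin (m + 1), a < b → α' a < α' b) ∧ α' 0 = k ∧
                α' (Fin.last m) = j
            · rw [if_pos hc', if_pos htm,
                if_pos (⟨hk, fun a b hab => hc'.1 a b hab, hc'.2.1, hc'.2.2⟩ :
                  i < k ∧ StrictMono α' ∧ α' 0 = k ∧ α' (Fin.last m) = j)]
            · rw [if_neg hc', if_neg, mul_zero]
              intro hcc
              exact hc' ⟨fun a b hab => hcc.2.1 hab, hcc.2.2⟩
          · refine (Finset.sum_eq_zero fun α' _ => ?_).symm
            rw [if_neg (fun hc => hk hc.1)]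
        rw [Finset.sum_congr rfl fun k _ => rhs_eq k, Finset.sum_comm]
        refine Finset.sum_congr rfl fun α' _ => ?_
        rw [Fintype.sum_eq_single (α' 0)]
        · by_cases h1 : i < α' 0 ∧ StrictMono α' ∧ α' (Fin.last m) = j
          · rw [if_pos h1, if_pos (⟨h1.1, h1.2.1, rfl, h1.2.2⟩ :
              i < α' 0 ∧ StrictMono α' ∧ α' 0 = α' 0 ∧ α' (Fin.last m) = j)]
          · rw [if_neg h1, if_neg (fun h2 => h1 ⟨h2.1, h2.2.1, h2.2.2.2⟩)]
        · intro k hk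
          rw [if_neg (fun hc => hk hc.2.2.1.symm)]
      · -- x ≠ i vanishes
        intro x hx
        refine Finset.sum_eq_zero fun α' _ => ?_
        rw [if_neg]
        intro hc
        exact hx (by simpa using hc.2.1)
    · -- B-term = stay part
      rw [G, Finset.mul_sum]
      refine Finset.sum_congr rfl fun α _ => ?_
      by_cases hc : (∀ a b : Fin (m + 2), a < b → α a < α b) ∧ α 0 = i ∧ α (Fin.last (m + 1)) = j
      · rw [if_pos hc, if_pos hc]
        by_cases h2 : m + 1 ≤ t
        · rw [if_pos h2, if_pos (show 1 ≤ t - m by omega), hc.2.1,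
            show t - m - 1 = t - (m + 1) from by omega]
          ring
        · rw [if_neg h2, if_neg (show ¬ 1 ≤ t - m by omega)]
          simp
      · rw [if_neg hc, if_neg hc, mul_zero]

lemma pow_tri (T : Matrix (Fin L) (Fin L) ℂ) (hT : ∀ i j : Fin L, j < i → T i j = 0) :
    ∀ t : ℕ, ∀ i j : Fin L, j < i → (T ^ t) i j = 0 := by
  intro t
  induction t with
  | zero =>
    intro i j hij
    rw [pow_zero]
    exact Matrix.one_apply_ne (ne_of_gt hij)
  | succ t ih =>
    intro i j hij
    rw [pow_succ', Matrix.mul_apply]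
    refine Finset.sum_eq_zero fun k _ => ?_
    by_cases hk : k < i
    · rw [hT i k hk, zero_mul]
    · rw [ih k j (lt_of_lt_of_le hij (not_lt.mp hk)), mul_zero]

lemma main_lem (T : Matrix (Fin L) (Fin L) ℂ) (hT : ∀ i j : Fin L, j < i → T i j = 0) :
    ∀ t : ℕ, ∀ i j : Fin L, (i : ℕ) ≤ (j : ℕ) →
      (T ^ t) i j = ∑ m ∈ Finset.range ((j : ℕ) - (i : ℕ) + 1), G T t m i j := by
  intro t
  induction t with
  | zero =>
    intro i j hij
    by_cases hij' : i = j
    · subst hij'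
      rw [pow_zero, Matrix.one_apply_eq, show (i : ℕ) - (i : ℕ) + 1 = 1 from by omega,
        Finset.sum_range_one, G_zero, if_pos rfl, pow_zero]
    · rw [pow_zero, Matrix.one_apply_ne hij']
      refine (Finset.sum_eq_zero fun m _ => ?_).symm
      cases m with
      | zero => rw [G_zero, if_neg hij']
      | succ m' => exact G_gt (by omega)
  | succ t ih =>
    intro i j hij
    have step : (T ^ (t + 1)) i j
        = ∑ k : Fin L, (if (i : ℕ) ≤ (k : ℕ) ∧ (k : ℕ) ≤ (j : ℕ)
            then T i k * ∑ m ∈ Finset.range ((j : ℕ) - (k : ℕ) + 1), G T t m k j else 0) := by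
      rw [pow_succ', Matrix.mul_apply]
      refine Finset.sum_congr rfl fun k _ => ?_
      by_cases h1 : (i : ℕ) ≤ (k : ℕ)
      · by_cases h2 : (k : ℕ) ≤ (j : ℕ)
        · rw [if_pos ⟨h1, h2⟩, ih k j h2]
        · rw [if_neg (fun hc => h2 hc.2),
            pow_tri T hT t k j (Fin.lt_def.mpr (by omega)), mul_zero]
      · rw [if_neg (fun hc => h1 hc.1), hT i k (Fin.lt_def.mpr (by omega)), zero_mul]
    rw [step]
    by_cases hij' : i = j
    · subst hij'
      rw [show (i : ℕ) - (i : ℕ) + 1 = 1 from by omega, Finset.sum_range_one, G_zero,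
        if_pos rfl]
      rw [Fintype.sum_eq_single i]
      · rw [if_pos ⟨le_refl _, le_refl _⟩, show (i : ℕ) - (i : ℕ) + 1 = 1 from by omega,
          Finset.sum_range_one, G_zero, if_pos rfl, ← pow_succ']
      · intro k hk
        rw [if_neg (fun hc => hk (Fin.ext (by omega)))]
    · have hij2 : (i : ℕ) < (j : ℕ) := lt_of_le_of_ne hij (fun h => hij' (Fin.ext h))
      symm
      rw [Finset.sum_range_succ' (fun m => G T (t + 1) m i j) ((j : ℕ) - (i : ℕ)),
        G_zero, if_neg hij', add_zero]
      rw [Finset.sum_congr rfl fun m _ => Grec T t m i j, Finset.sum_add_distrib,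
        ← Finset.mul_sum, Finset.sum_comm]
      have hG0 : ∑ m ∈ Finset.range ((j : ℕ) - (i : ℕ)), G T t (m + 1) i j
          = ∑ m ∈ Finset.range ((j : ℕ) - (i : ℕ) + 1), G T t m i j := by
        rw [Finset.sum_range_succ' (fun m => G T t m i j) ((j : ℕ) - (i : ℕ)),
          G_zero, if_neg hij', add_zero]
      rw [hG0]
      -- match k = i term and k ≠ i terms
      have swap : ∀ k : Fin L,
          ((∑ m ∈ Finset.range ((j : ℕ) - (i : ℕ)), if i < k then T i k * G T t m k j else 0)
            + if k = i then T i i * ∑ m ∈ Finset.range ((j : ℕ) - (i : ℕ) + 1), G T t m i j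
              else 0)
          = (if (i : ℕ) ≤ (k : ℕ) ∧ (k : ℕ) ≤ (j : ℕ)
              then T i k * ∑ m ∈ Finset.range ((j : ℕ) - (k : ℕ) + 1), G T t m k j else 0) := by
        intro k
        by_cases hk : k = i
        · subst hk
          rw [if_pos rfl, if_pos ⟨le_refl _, le_of_lt hij2⟩,
            Finset.sum_eq_zero fun m _ => if_neg (lt_irrefl k), zero_add]
        · rw [if_neg hk, add_zero]
          have hne : (i : ℕ) ≠ (k : ℕ) := fun h => hk (Fin.ext h.symm)
          by_cases hik : (i : ℕ) < (k : ℕ)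
          · have hikF : i < k := Fin.lt_def.mpr hik
            by_cases hkj : (k : ℕ) ≤ (j : ℕ)
            · rw [if_pos ⟨le_of_lt hik, hkj⟩,
                Finset.sum_congr rfl fun m _ => if_pos hikF, ← Finset.mul_sum]
              congr 1
              refine (Finset.sum_subset (Finset.range_subset_range.mpr (by omega))
                fun m _ hm => ?_).symm
              rw [Finset.mem_range, not_lt] at hm
              exact G_lt (by omega)
            · rw [if_neg (fun hc => hkj hc.2)]
              refine Finset.sum_eq_zero fun m _ => ?_
              rw [if_pos hikF, G_lt (by omega), mul_zero]
          · rw [if_neg (fun hc => hik (by omega : (i : ℕ) < (k : ℕ)))]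
            exact Finset.sum_eq_zero fun m _ => if_neg (fun h => hik (Fin.lt_def.mp h))
      refine Eq.trans ?_ (Finset.sum_congr rfl fun k _ => swap k)
      rw [Finset.sum_add_distrib,
        Finset.sum_ite_eq' Finset.univ i
          (fun _ => T i i * ∑ m ∈ Finset.range ((j : ℕ) - (i : ℕ) + 1), G T t m i j),
        if_pos (Finset.mem_univ i), add_comm]

end Stmt6Aux

/-- explicit entrywise formula for powers of an upper triangular matrix. -/
theorem stmt_6 (L : ℕ) (hL : 1 ≤ L)
    (T : Matrix (Fin L) (Fin L) ℂ)
    (hT : ∀ i j : Fin L, j < i → T i j = 0) :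
    ∀ t : ℕ, 1 ≤ t → ∀ i j : Fin L,
      ((T ^ t) i i = (T i i) ^ t) ∧
      (j < i → (T ^ t) i j = 0) ∧
      (i < j → (T ^ t) i j =
        ∑ m ∈ Finset.Icc 1 ((j : ℕ) - (i : ℕ)),
          ∑ α : Fin (m + 1) → Fin L,
            if (∀ a b : Fin (m + 1), a < b → α a < α b) ∧ α 0 = i ∧ α (Fin.last m) = j
            then
              (∏ l : Fin m, T (α l.castSucc) (α l.succ)) *
                (if m ≤ t then
                  ∑ β ∈ Finset.Nat.antidiagonalTuple (m + 1) (t - m),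
                    ∏ kk : Fin (m + 1), (T (α kk) (α kk)) ^ β kk
                 else 0)
            else 0) := by
  intro t ht i j
  refine ⟨?_, ?_, ?_⟩
  · have h := Stmt6Aux.main_lem T hT t i i (le_refl _)
    rwa [show (i : ℕ) - (i : ℕ) + 1 = 1 from by omega, Finset.sum_range_one,
      Stmt6Aux.G_zero, if_pos rfl] at h
  · exact fun h => Stmt6Aux.pow_tri T hT t i j h
  · intro hij
    have hij2 : (i : ℕ) < (j : ℕ) := hij
    have hmain := Stmt6Aux.main_lem T hT t i j (le_of_lt hij2)
    rw [hmain]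
    have hins : Finset.range ((j : ℕ) - (i : ℕ) + 1)
        = insert 0 (Finset.Icc 1 ((j : ℕ) - (i : ℕ))) := by
      ext x
      simp only [Finset.mem_range, Finset.mem_insert, Finset.mem_Icc]
      omega
    rw [hins, Finset.sum_insert (by simp), Stmt6Aux.G_zero,
      if_neg (Fin.ne_of_lt hij), zero_add]
    rfl
end

section
/- Let L ≥ 1 and let P = [p_{i,j}] (i,j ∈ {0,1,…,L}) be a column-stochastic real matrix (entries nonnegative, each column summing to 1) with p_{0,0} = 1. Let e_0 = 0 and e_1,…,e_L > 0, and for i ∈ {1,…,L} define the drift Δe(i) := Σ_{k=0}^{L} p_{k,i} (e_i − e_k) = e_i − Σ_{k=0}^{L} p_{k,i} e_k. Assume Δe(i)/e_i > 0 for every i ∈ {1,…,L}, and set ρ := min_{1 ≤ i ≤ L} Δe(i)/e_i. Let R = [p_{i,j}]_{i,j=1,…,L} and let p⁰ ∈ ℝᴸ be entrywise nonnegative with Σ_i p⁰_i ≤ 1. Then for every t ≥ 0, eᵀ Rᵗ p⁰ ≤ (1 − ρ)ᵗ · eᵀ p⁰. -/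
open Matrix

/-- convergence-rate upper bound `e^{[t]} ≤ (1-ρ)ᵗ e^{[0]}`. -/
theorem stmt_7 (L : ℕ) (hL : 1 ≤ L)
    (P : Matrix (Fin (L + 1)) (Fin (L + 1)) ℝ)
    (hPnn : ∀ i j, 0 ≤ P i j) (hPcol : ∀ j, ∑ i, P i j = 1) (hP00 : P 0 0 = 1)
    (e : Fin (L + 1) → ℝ) (he0 : e 0 = 0) (hepos : ∀ i : Fin L, 0 < e i.succ)
    (Δe : Fin L → ℝ)
    (hΔ : ∀ i : Fin L, Δe i = ∑ k, P k i.succ * (e i.succ - e k))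
    (hdrift : ∀ i : Fin L, 0 < Δe i / e i.succ)
    (ρ : ℝ)
    (hρ : ρ = Finset.univ.inf' (Finset.univ_nonempty_iff.mpr ⟨(⟨0, hL⟩ : Fin L)⟩)
      (fun i : Fin L => Δe i / e i.succ))
    (R : Matrix (Fin L) (Fin L) ℝ) (hR : ∀ i j : Fin L, R i j = P i.succ j.succ)
    (p0 : Fin L → ℝ) (hp0 : ∀ i, 0 ≤ p0 i) (hp0sum : ∑ i, p0 i ≤ 1) :
    ∀ t : ℕ, (fun i : Fin L => e i.succ) ⬝ᵥ ((R ^ t) *ᵥ p0)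
      ≤ (1 - ρ) ^ t * ((fun i : Fin L => e i.succ) ⬝ᵥ p0) := by
  have henn : ∀ k : Fin (L + 1), 0 ≤ e k := by
    intro k
    cases k using Fin.cases with
    | zero => simp [he0]
    | succ i => exact (hepos i).le
  have hsum : ∀ i : Fin L, ∑ k, P k i.succ * e k = e i.succ - Δe i := by
    intro i
    have h1 : Δe i = e i.succ - ∑ k, P k i.succ * e k := by
      rw [hΔ i, Finset.sum_congr rfl (fun k _ => mul_sub (P k i.succ) _ _),
        Finset.sum_sub_distrib, ← Finset.sum_mul, hPcol, one_mul]
    linarith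
  have hρle : ∀ i : Fin L, ρ * e i.succ ≤ Δe i := by
    intro i
    have h1 : ρ ≤ Δe i / e i.succ := by
      rw [hρ]; exact Finset.inf'_le _ (Finset.mem_univ i)
    exact (le_div_iff₀ (hepos i)).mp h1
  have hρ1 : ρ ≤ 1 := by
    set i0 : Fin L := ⟨0, hL⟩
    have hnn : 0 ≤ ∑ k, P k i0.succ * e k :=
      Finset.sum_nonneg fun k _ => mul_nonneg (hPnn _ _) (henn k)
    have h1 : Δe i0 ≤ e i0.succ := by have := hsum i0; linarith
    have h2 := hρle i0
    nlinarith [hepos i0]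
  have hcol : ∀ j : Fin L, ∑ i, e i.succ * R i j ≤ (1 - ρ) * e j.succ := by
    intro j
    have h1 : ∑ k : Fin (L + 1), P k j.succ * e k = ∑ i : Fin L, e i.succ * R i j := by
      rw [Fin.sum_univ_succ]
      simp [he0, hR, mul_comm]
    have h2 := hsum j
    have h3 := hρle j
    rw [← h1] at *
    nlinarith
  have hstep : ∀ v : Fin L → ℝ, (∀ i, 0 ≤ v i) →
      (fun i : Fin L => e i.succ) ⬝ᵥ (R *ᵥ v) ≤ (1 - ρ) * ((fun i : Fin L => e i.succ) ⬝ᵥ v) := by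
    intro v hv
    have h1 : (fun i : Fin L => e i.succ) ⬝ᵥ (R *ᵥ v)
        = ∑ j, (∑ i, e i.succ * R i j) * v j := by
      simp only [dotProduct, mulVec, Finset.mul_sum, Finset.sum_mul]
      rw [Finset.sum_comm]
      exact Finset.sum_congr rfl fun j _ => Finset.sum_congr rfl fun i _ => by ring
    have h2 : (1 - ρ) * ((fun i : Fin L => e i.succ) ⬝ᵥ v)
        = ∑ j, ((1 - ρ) * e j.succ) * v j := by
      simp only [dotProduct, Finset.mul_sum]
      exact Finset.sum_congr rfl fun j _ => by ring
    rw [h1, h2]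
    exact Finset.sum_le_sum fun j _ =>
      mul_le_mul_of_nonneg_right (hcol j) (hv j)
  have hvnn : ∀ t : ℕ, ∀ i, 0 ≤ ((R ^ t) *ᵥ p0) i := by
    intro t
    induction t with
    | zero => simpa using hp0
    | succ t ih =>
      intro i
      rw [pow_succ', ← Matrix.mulVec_mulVec]
      simp only [mulVec, dotProduct]
      exact Finset.sum_nonneg fun j _ => mul_nonneg (by rw [hR]; exact hPnn _ _) (ih j)
  intro t
  induction t with
  | zero => simp
  | succ t ih =>
    calc (fun i : Fin L => e i.succ) ⬝ᵥ ((R ^ (t + 1)) *ᵥ p0)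
        = (fun i : Fin L => e i.succ) ⬝ᵥ (R *ᵥ ((R ^ t) *ᵥ p0)) := by
          rw [pow_succ', ← Matrix.mulVec_mulVec]
      _ ≤ (1 - ρ) * ((fun i : Fin L => e i.succ) ⬝ᵥ ((R ^ t) *ᵥ p0)) := hstep _ (hvnn t)
      _ ≤ (1 - ρ) * ((1 - ρ) ^ t * ((fun i : Fin L => e i.succ) ⬝ᵥ p0)) :=
          mul_le_mul_of_nonneg_left ih (by linarith)
      _ = (1 - ρ) ^ (t + 1) * ((fun i : Fin L => e i.succ) ⬝ᵥ p0) := by ring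
end

section
/- Let L ≥ 1 and let B and B' be L×L real matrices with nonnegative entries. Suppose (i) T̂ B' ≥ T̂ B entrywise, and (ii) every entry of T̂ B' T̂⁻¹ is nonnegative. Then for every t ≥ 0, T̂ (B')ᵗ ≥ T̂ Bᵗ entrywise. -/
open Matrix

/-- sufficient condition for the matrix iteration of `B'` to be
slower than that of `B`: if `T̂ B' ≥ T̂ B` and `T̂ B' T̂⁻¹ ≥ 0` entrywise, then
`T̂ (B')ᵗ ≥ T̂ Bᵗ` entrywise for every `t`. -/
theorem stmt_10 (L : ℕ) (hL : 1 ≤ L)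
    (B B' : Matrix (Fin L) (Fin L) ℝ)
    (hBnn : ∀ i j, 0 ≤ B i j) (hB'nn : ∀ i j, 0 ≤ B' i j)
    (Th : Matrix (Fin L) (Fin L) ℝ)
    (hTh : ∀ i j : Fin L, Th i j = if i ≤ j then 1 else 0)
    (h1 : ∀ i j, (Th * B) i j ≤ (Th * B') i j)
    (h2 : ∀ i j, 0 ≤ (Th * B' * Th⁻¹) i j) :
    ∀ t : ℕ, ∀ i j, (Th * B ^ t) i j ≤ (Th * B' ^ t) i j := by
  have hTri : Th.BlockTriangular id := by
    intro i j hij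
    rw [hTh]
    exact if_neg (not_le.mpr hij)
  have hdet : Th.det = 1 := by
    rw [Matrix.det_of_upperTriangular hTri]
    have : ∀ i : Fin L, Th i i = 1 := fun i => by rw [hTh, if_pos le_rfl]
    simp [this]
  have hinvTh : Th⁻¹ * Th = 1 :=
    Matrix.nonsing_inv_mul _ (by rw [hdet]; exact isUnit_one)
  have key : ∀ X : Matrix (Fin L) (Fin L) ℝ,
      Th * B' * Th⁻¹ * (Th * X) = Th * (B' * X) := by
    intro X
    calc Th * B' * Th⁻¹ * (Th * X) = Th * B' * (Th⁻¹ * Th * X) := by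
          simp only [Matrix.mul_assoc]
      _ = Th * (B' * X) := by rw [hinvTh, Matrix.one_mul, Matrix.mul_assoc]
  have hpow : ∀ t (i j : Fin L), 0 ≤ (B ^ t) i j := by
    intro t
    induction t with
    | zero =>
        intro i j
        simp only [pow_zero, Matrix.one_apply]
        split <;> norm_num
    | succ t ih =>
        intro i j
        rw [pow_succ, Matrix.mul_apply]
        exact Finset.sum_nonneg fun k _ => mul_nonneg (ih i k) (hBnn k j)
  intro t
  induction t with
  | zero => intro i j; exact le_rfl
  | succ t ih =>
      intro i j
      have step1 : (Th * B ^ (t + 1)) i j ≤ (Th * B' * B ^ t) i j := by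
        rw [pow_succ', ← Matrix.mul_assoc, Matrix.mul_apply, Matrix.mul_apply]
        exact Finset.sum_le_sum fun k _ =>
          mul_le_mul_of_nonneg_right (h1 i k) (hpow t k j)
      have step2 : Th * B' * B ^ t = Th * B' * Th⁻¹ * (Th * B ^ t) := by
        rw [key, Matrix.mul_assoc]
      have step3 : (Th * B' * Th⁻¹ * (Th * B ^ t)) i j ≤
          (Th * B' * Th⁻¹ * (Th * B' ^ t)) i j := by
        rw [Matrix.mul_apply, Matrix.mul_apply]
        exact Finset.sum_le_sum fun k _ =>
          mul_le_mul_of_nonneg_left (ih k j) (h2 i k)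
      have step4 : Th * B' * Th⁻¹ * (Th * B' ^ t) = Th * B' ^ (t + 1) := by
        rw [key, ← pow_succ']
      calc (Th * B ^ (t + 1)) i j ≤ (Th * B' * B ^ t) i j := step1
        _ = (Th * B' * Th⁻¹ * (Th * B ^ t)) i j := by rw [step2]
        _ ≤ (Th * B' * Th⁻¹ * (Th * B' ^ t)) i j := step3
        _ = (Th * B' ^ (t + 1)) i j := by rw [step4]
end

section
/- Let L ≥ 1 and let P = [p_{i,j}] and P' = [p'_{i,j}] (i,j ∈ {0,1,…,L}) be upper triangular column-stochastic real matrices (entries nonnegative, each column summing to 1, and p_{i,j} = p'_{i,j} = 0 whenever i > j) with p_{0,0} = p'_{0,0} = 1. Suppose: (i) p'_{j,j} ≥ p_{j,j} for every j ∈ {1,…,L}; (ii) Σ_{l=0}^{i−1} (p_{l,j} − p'_{l,j}) ≥ 0 for all 1 ≤ i < j ≤ L; and (iii) Σ_{l=0}^{i} (p'_{l,j−1} − p'_{l,j}) ≥ 0 for all 0 ≤ i < j−1 with j ≤ L. Let R = [p_{i,j}]_{i,j=1,…,L} and R' = [p'_{i,j}]_{i,j=1,…,L}. Then for every t ≥ 0,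 T̂ (R')ᵗ ≥ T̂ Rᵗ entrywise, i.e., R' ⪰ R. -/
open Matrix

private lemma abel_aux (n : ℕ) (f h : ℕ → ℝ)
    (hmono : ∀ k, k + 1 < n → f k ≤ f (k + 1))
    (hH : ∀ k, k < n → 0 ≤ ∑ m ∈ Finset.Ico k n, h m) :
    ∀ d a, n ≤ a + d →
      f a * (∑ m ∈ Finset.Ico a n, h m) ≤ ∑ k ∈ Finset.Ico a n, f k * h k := by
  intro d
  induction d with
  | zero =>
      intro a ha
      rw [Finset.Ico_eq_empty (by omega)]
      simp
  | succ d ih =>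
      intro a ha
      by_cases h1 : n ≤ a
      · rw [Finset.Ico_eq_empty (by omega)]
        simp
      · push_neg at h1
        rw [Finset.sum_eq_sum_Ico_succ_bot h1,
            Finset.sum_eq_sum_Ico_succ_bot h1 (f := fun k => f k * h k)]
        have ih' := ih (a + 1) (by omega)
        by_cases h2 : a + 1 < n
        · have hmono' := hmono a h2
          have hH' := hH (a + 1) h2
          have hmul := mul_le_mul_of_nonneg_right hmono' hH'
          rw [mul_add]
          linarith
        · have he : Finset.Ico (a + 1) n = ∅ := Finset.Ico_eq_empty (by omega)
          rw [he]
          simp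
  
private lemma abel_key (n : ℕ) (f h : ℕ → ℝ) (hf0 : 0 ≤ f 0)
    (hmono : ∀ k, k + 1 < n → f k ≤ f (k + 1))
    (hH : ∀ k, k < n → 0 ≤ ∑ m ∈ Finset.Ico k n, h m) :
    0 ≤ ∑ k ∈ Finset.range n, f k * h k := by
  rcases Nat.eq_zero_or_pos n with rfl | hn
  · simp
  · have h1 := abel_aux n f h hmono hH n 0 (by omega)
    rw [Finset.range_eq_Ico]
    exact le_trans (mul_nonneg hf0 (hH 0 hn)) h1

/-- construction of a slower chain from an upper triangular
transition matrix: under conditions (i)–(iii), `R' ⪰ R`. -/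
theorem stmt_11 (L : ℕ) (hL : 1 ≤ L)
    (P P' : Matrix (Fin (L + 1)) (Fin (L + 1)) ℝ)
    (hPnn : ∀ i j, 0 ≤ P i j) (hP'nn : ∀ i j, 0 ≤ P' i j)
    (hPcol : ∀ j, ∑ i, P i j = 1) (hP'col : ∀ j, ∑ i, P' i j = 1)
    (hPtri : ∀ i j, j < i → P i j = 0) (hP'tri : ∀ i j, j < i → P' i j = 0)
    (hP00 : P 0 0 = 1) (hP'00 : P' 0 0 = 1)
    (hcond1 : ∀ j : Fin L, P j.succ j.succ ≤ P' j.succ j.succ)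
    (hcond2 : ∀ i j : Fin (L + 1), 0 < (i : ℕ) → i < j →
      0 ≤ ∑ l ∈ Finset.univ.filter (fun l : Fin (L + 1) => l < i), (P l j - P' l j))
    (hcond3 : ∀ (i : Fin (L + 1)) (j : Fin L), (i : ℕ) < (j : ℕ) →
      0 ≤ ∑ l ∈ Finset.univ.filter (fun l : Fin (L + 1) => l ≤ i),
        (P' l j.castSucc - P' l j.succ))
    (R R' : Matrix (Fin L) (Fin L) ℝ)
    (hR : ∀ i j : Fin L, R i j = P i.succ j.succ)
    (hR' : ∀ i j : Fin L, R' i j = P' i.succ j.succ)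
    (Th : Matrix (Fin L) (Fin L) ℝ)
    (hTh : ∀ i j : Fin L, Th i j = if i ≤ j then 1 else 0) :
    ∀ t : ℕ, ∀ i j, (Th * R ^ t) i j ≤ (Th * R' ^ t) i j := by
  -- splitting a column sum into head and tail
  have hsplit : ∀ (M : Matrix (Fin (L+1)) (Fin (L+1)) ℝ) (a j : Fin (L+1)),
      (∑ l, if a ≤ l then M l j else 0) + (∑ l, if l < a then M l j else 0)
        = ∑ l, M l j := by
    intro M a j
    rw [← Finset.sum_add_distrib]
    refine Finset.sum_congr rfl fun l _ => ?_
    by_cases hla : a ≤ l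
    · rw [if_pos hla, if_neg (not_lt.mpr hla), add_zero]
    · rw [if_neg hla, if_pos (not_le.mp hla), zero_add]
  -- tail sum of an upper-triangular column starting at the diagonal
  have tail_diag : ∀ (M : Matrix (Fin (L+1)) (Fin (L+1)) ℝ),
      (∀ x y : Fin (L+1), y < x → M x y = 0) → ∀ c : Fin (L+1),
      (∑ l, if c ≤ l then M l c else 0) = M c c := by
    intro M hM c
    rw [Finset.sum_eq_single c (fun l _ hne => ?_)
      (fun habs => absurd (Finset.mem_univ c) habs)]
    · rw [if_pos le_rfl]
    · by_cases hcl : c ≤ l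
      · rw [if_pos hcl, hM l c (lt_of_le_of_ne hcl (Ne.symm hne))]
      · rw [if_neg hcl]
  -- KEY 1: columnwise tail-sum comparison between P and P'
  have key_tail_le : ∀ i k : Fin L,
      (∑ l, if i.succ ≤ l then P l k.succ else 0)
        ≤ (∑ l, if i.succ ≤ l then P' l k.succ else 0) := by
    intro i k
    rcases lt_trichotomy (i.succ : Fin (L+1)) k.succ with hlt | heq | hgt
    · have h2 := hcond2 i.succ k.succ (by simp) hlt
      rw [Finset.sum_sub_distrib] at h2
      simp only [Finset.sum_filter] at h2
      have e1 := hsplit P i.succ k.succ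
      have e2 := hsplit P' i.succ k.succ
      rw [hPcol] at e1
      rw [hP'col] at e2
      linarith
    · rw [heq, tail_diag P hPtri, tail_diag P' hP'tri]
      exact hcond1 k
    · have hz : ∀ l : Fin (L+1), (if i.succ ≤ l then P l k.succ else 0) = 0 := by
        intro l
        by_cases hla : i.succ ≤ l
        · rw [if_pos hla, hPtri l k.succ (lt_of_lt_of_le hgt hla)]
        · rw [if_neg hla]
      rw [Finset.sum_eq_zero fun l _ => hz l]
      refine Finset.sum_nonneg fun l _ => ?_
      by_cases hla : i.succ ≤ l
      · rw [if_pos hla]; exact hP'nn _ _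
      · rw [if_neg hla]
  -- KEY 2: monotonicity of tail sums between adjacent columns of P'
  have key_mono : ∀ (i k k' : Fin L), (k : ℕ) + 1 = (k' : ℕ) →
      (∑ l, if i.succ ≤ l then P' l k.succ else 0)
        ≤ (∑ l, if i.succ ≤ l then P' l k'.succ else 0) := by
    intro i k k' hkk'
    by_cases hik : (i : ℕ) < (k' : ℕ)
    · have h3 := hcond3 i.castSucc k' (by simpa using hik)
      have hcc : k'.castSucc = k.succ := by
        apply Fin.ext
        simp [← hkk']
      rw [hcc] at h3
      rw [Finset.sum_sub_distrib] at h3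
      simp only [Finset.sum_filter] at h3
      have e1 := hsplit P' i.succ k.succ
      have e2 := hsplit P' i.succ k'.succ
      rw [hP'col] at e1
      rw [hP'col] at e2
      have hlts : ∀ l : Fin (L+1), (l < i.succ) = (l ≤ i.castSucc) := by
        intro l
        simp only [Fin.lt_def, Fin.le_def, Fin.val_succ, Fin.coe_castSucc]
        exact propext Nat.lt_succ_iff
      simp only [hlts] at e1 e2
      linarith
    · push_neg at hik
      have hz : ∀ l : Fin (L+1), (if i.succ ≤ l then P' l k.succ else 0) = 0 := by
        intro l
        by_cases hla : i.succ ≤ l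
        · rw [if_pos hla]
          apply hP'tri
          have h1 : (i.succ : Fin (L+1)).val ≤ l.val := Fin.le_def.mp hla
          have h2 : (k.succ : Fin (L+1)).val < l.val := by
            simp only [Fin.val_succ] at h1 ⊢
            omega
          exact Fin.lt_def.mpr h2
        · rw [if_neg hla]
      rw [Finset.sum_eq_zero fun l _ => hz l]
      refine Finset.sum_nonneg fun l _ => ?_
      by_cases hla : i.succ ≤ l
      · rw [if_pos hla]; exact hP'nn _ _
      · rw [if_neg hla]
  -- expressing (Th * M) entries as tail sums
  have hThM : ∀ (M : Matrix (Fin L) (Fin L) ℝ) (a b : Fin L),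
      (Th * M) a b = ∑ m, if a ≤ m then M m b else 0 := by
    intro M a b
    rw [mul_apply]
    refine Finset.sum_congr rfl fun m _ => ?_
    rw [hTh]
    by_cases hm : a ≤ m
    · rw [if_pos hm, if_pos hm, one_mul]
    · rw [if_neg hm, if_neg hm, zero_mul]
  -- lifting Fin L tail sums to Fin (L+1) tail sums
  have hlift : ∀ (Q : Matrix (Fin (L+1)) (Fin (L+1)) ℝ) (a b : Fin L),
      (∑ m : Fin L, if a ≤ m then Q m.succ b.succ else 0)
        = ∑ l : Fin (L+1), if a.succ ≤ l then Q l b.succ else 0 := by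
    intro Q a b
    rw [Fin.sum_univ_succ]
    have h0 : ¬ ((a.succ : Fin (L+1)) ≤ 0) := by
      simp [Fin.le_def]
    rw [if_neg h0, zero_add]
    refine Finset.sum_congr rfl fun m _ => ?_
    by_cases hm : a ≤ m
    · rw [if_pos hm, if_pos (Fin.succ_le_succ_iff.mpr hm)]
    · rw [if_neg hm, if_neg (fun hc => hm (Fin.succ_le_succ_iff.mp hc))]
  -- step comparison: Th * R ≤ Th * R'
  have hstep : ∀ i k : Fin L, (Th * R) i k ≤ (Th * R') i k := by
    intro i k
    rw [hThM, hThM]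
    have er : (∑ m : Fin L, if i ≤ m then R m k else 0)
        = ∑ m : Fin L, if i ≤ m then P m.succ k.succ else 0 :=
      Finset.sum_congr rfl fun m _ => by rw [hR]
    have er' : (∑ m : Fin L, if i ≤ m then R' m k else 0)
        = ∑ m : Fin L, if i ≤ m then P' m.succ k.succ else 0 :=
      Finset.sum_congr rfl fun m _ => by rw [hR']
    rw [er, er', hlift P, hlift P']
    exact key_tail_le i k
  -- monotonicity of rows of Th * R'
  have hstep' : ∀ (i k k' : Fin L), (k : ℕ) + 1 = (k' : ℕ) →
      (Th * R') i k ≤ (Th * R') i k' := by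
    intro i k k' hkk'
    rw [hThM, hThM]
    have er : (∑ m : Fin L, if i ≤ m then R' m k else 0)
        = ∑ m : Fin L, if i ≤ m then P' m.succ k.succ else 0 :=
      Finset.sum_congr rfl fun m _ => by rw [hR']
    have er' : (∑ m : Fin L, if i ≤ m then R' m k' else 0)
        = ∑ m : Fin L, if i ≤ m then P' m.succ k'.succ else 0 :=
      Finset.sum_congr rfl fun m _ => by rw [hR']
    rw [er, er', hlift P', hlift P']
    exact key_mono i k k' hkk'
  -- nonnegativity of Th * R'
  have hA'nn : ∀ i k : Fin L, 0 ≤ (Th * R') i k := by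
    intro i k
    rw [hThM]
    refine Finset.sum_nonneg fun m _ => ?_
    by_cases hm : i ≤ m
    · rw [if_pos hm, hR']; exact hP'nn _ _
    · rw [if_neg hm]
  -- nonnegativity of powers of R
  have hRt : ∀ (s : ℕ) (a b : Fin L), 0 ≤ (R ^ s) a b := by
    intro s
    induction s with
    | zero =>
        intro a b
        rw [pow_zero, one_apply]
        split_ifs <;> norm_num
    | succ s ihs =>
        intro a b
        rw [pow_succ, mul_apply]
        exact Finset.sum_nonneg fun m _ =>
          mul_nonneg (ihs a m) (by rw [hR]; exact hPnn _ _)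
  -- main induction on t
  intro t
  induction t with
  | zero =>
      intro i j
      rw [pow_zero, pow_zero]
  | succ t ih =>
      intro i j
      have eR : Th * R ^ (t+1) = Th * R * R ^ t := by
        rw [pow_succ', ← mul_assoc]
      have eR' : Th * R' ^ (t+1) = Th * R' * R' ^ t := by
        rw [pow_succ', ← mul_assoc]
      rw [eR, eR', mul_apply, mul_apply]
      have step1 : ∑ k, (Th * R) i k * (R ^ t) k j
          ≤ ∑ k, (Th * R') i k * (R ^ t) k j :=
        Finset.sum_le_sum fun k _ =>
          mul_le_mul_of_nonneg_right (hstep i k) (hRt t k j)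
      refine le_trans step1 ?_
      rw [← sub_nonneg, ← Finset.sum_sub_distrib]
      have hre : (∑ k, ((Th * R') i k * (R' ^ t) k j - (Th * R') i k * (R ^ t) k j))
          = ∑ k, (Th * R') i k * ((R' ^ t) k j - (R ^ t) k j) :=
        Finset.sum_congr rfl fun k _ => by ring
      rw [hre]
      set F : ℕ → ℝ := fun m => if hm : m < L then (Th * R') i ⟨m, hm⟩ else 0 with hF
      set Hh : ℕ → ℝ := fun m =>
        if hm : m < L then ((R' ^ t) ⟨m, hm⟩ j - (R ^ t) ⟨m, hm⟩ j) else 0 with hHh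
      have hconv : (∑ k : Fin L, (Th * R') i k * ((R' ^ t) k j - (R ^ t) k j))
          = ∑ m ∈ Finset.range L, F m * Hh m := by
        rw [← Fin.sum_univ_eq_sum_range (fun m => F m * Hh m) L]
        refine Finset.sum_congr rfl fun k _ => ?_
        simp only [hF, hHh]
        rw [dif_pos k.isLt, dif_pos k.isLt]
      rw [hconv]
      refine abel_key L F Hh ?_ ?_ ?_
      · simp only [hF]
        rw [dif_pos (show 0 < L from hL)]
        exact hA'nn i _
      · intro m hm
        simp only [hF]
        rw [dif_pos (show m < L by omega), dif_pos hm]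
        exact hstep' i ⟨m, by omega⟩ ⟨m + 1, hm⟩ rfl
      · intro k hk
        have htail : ∑ m ∈ Finset.Ico k L, Hh m
            = (Th * R' ^ t) ⟨k, hk⟩ j - (Th * R ^ t) ⟨k, hk⟩ j := by
          have hIco : Finset.Ico k L = (Finset.range L).filter (fun m => k ≤ m) := by
            ext x
            simp only [Finset.mem_Ico, Finset.mem_filter, Finset.mem_range]
            omega
          rw [hIco, Finset.sum_filter,
            ← Fin.sum_univ_eq_sum_range (fun m => if k ≤ m then Hh m else 0) L,
            hThM, hThM, ← Finset.sum_sub_distrib]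
          refine Finset.sum_congr rfl fun m _ => ?_
          by_cases hkm : k ≤ (m : ℕ)
          · rw [if_pos hkm, if_pos (Fin.le_def.mpr hkm), if_pos (Fin.le_def.mpr hkm)]
            simp only [hHh]
            rw [dif_pos m.isLt]
          · rw [if_neg hkm, if_neg (fun hc => hkm (Fin.le_def.mp hc)),
              if_neg (fun hc => hkm (Fin.le_def.mp hc))]
            simp
        rw [htail, sub_nonneg]
        exact ih ⟨k, hk⟩ j
end

section
/- Let L ≥ 1 and let R be an L×L upper triangular real matrix with nonnegative entries and diagonal entries (eigenvalues) λ_1,…,λ_L. Let e, p⁰ ∈ ℝᴸ be entrywise nonnegative. Then for every δ > 0 there exist nonnegative real numbers ε_1,…,ε_L with ε_i ≤ δ such that the values λ_1+ε_1, …, λ_L+ε_L are pairwise distinct, and there exist real coefficients c_1,…,c_L such that for every t ≥ 1, eᵀ Rᵗ p⁰ ≤ Σ_{i=1}^{L} c_i (λ_i + ε_i)ᵗ. -/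
open Matrix Finset

lemma pow_mono_nonneg {L : ℕ} (A B : Matrix (Fin L) (Fin L) ℝ)
    (hA : ∀ i j, 0 ≤ A i j) (hAB : ∀ i j, A i j ≤ B i j) (t : ℕ) :
    ∀ i j, 0 ≤ (A ^ t) i j ∧ (A ^ t) i j ≤ (B ^ t) i j := by
  induction t with
  | zero =>
    intro i j
    simp only [pow_zero, Matrix.one_apply]
    split <;> norm_num
  | succ t ih =>
    intro i j
    rw [pow_succ, pow_succ]
    simp only [Matrix.mul_apply]
    constructor
    · exact Finset.sum_nonneg fun k _ => mul_nonneg (ih i k).1 (hA k j)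
    · refine Finset.sum_le_sum fun k _ => ?_
      exact mul_le_mul (ih i k).2 (hAB k j) (hA k j) ((ih i k).1.trans (ih i k).2)

lemma strict_pow_apply {L : ℕ} (N : Matrix (Fin L) (Fin L) ℝ)
    (h : ∀ i j : Fin L, ¬ i < j → N i j = 0) (k : ℕ) :
    ∀ i j : Fin L, (j : ℕ) < (i : ℕ) + k → (N ^ k) i j = 0 := by
  induction k with
  | zero =>
    intro i j hj
    rw [pow_zero, Matrix.one_apply_ne]
    intro hij; subst hij; omega
  | succ k ih =>
    intro i j hj
    rw [pow_succ', Matrix.mul_apply]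
    refine Finset.sum_eq_zero fun m _ => ?_
    by_cases hm : i < m
    · rw [ih m j (by have := hm; omega), mul_zero]
    · rw [h i m hm, zero_mul]

lemma my_sum_mulVec {L : ℕ} (s : Finset ℕ) (F : ℕ → Matrix (Fin L) (Fin L) ℝ) (v : Fin L → ℝ) :
    (∑ k ∈ s, F k) *ᵥ v = ∑ k ∈ s, F k *ᵥ v := by
  ext i
  simp only [Matrix.mulVec, dotProduct, Finset.sum_apply, Matrix.sum_apply, Finset.sum_mul]
  rw [Finset.sum_comm]

lemma my_binom {L : ℕ} (N : Matrix (Fin L) (Fin L) ℝ) (l : ℝ) (t : ℕ) :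
    (l • (1 : Matrix (Fin L) (Fin L) ℝ) + N) ^ t
      = ∑ k ∈ Finset.range (t + 1), ((t.choose k : ℝ) * l ^ (t - k)) • N ^ k := by
  have hcomm : Commute N (l • (1 : Matrix (Fin L) (Fin L) ℝ)) :=
    (Commute.one_right N).smul_right l
  rw [add_comm, hcomm.add_pow]
  refine Finset.sum_congr rfl fun k hk => ?_
  rw [smul_pow, one_pow, mul_smul_comm, mul_one, smul_mul_assoc,
    ← (Nat.cast_commute (t.choose k) (N ^ k)).eq, ← nsmul_eq_mul,
    ← Nat.cast_smul_eq_nsmul ℝ, smul_smul, mul_comm (l ^ (t-k))]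

/-- for an upper triangular nonnegative matrix `R`, the error is
upper-bounded by `Σᵢ cᵢ (λᵢ + εᵢ)ᵗ` with arbitrarily small `εᵢ ≥ 0` making the
perturbed eigenvalues pairwise distinct. -/
theorem stmt_12 (L : ℕ) (hL : 1 ≤ L)
    (R : Matrix (Fin L) (Fin L) ℝ)
    (hRnn : ∀ i j, 0 ≤ R i j) (hRtri : ∀ i j : Fin L, j < i → R i j = 0)
    (e p0 : Fin L → ℝ) (he : ∀ i, 0 ≤ e i) (hp0 : ∀ i, 0 ≤ p0 i) :
    ∀ δ : ℝ, 0 < δ → ∃ ε : Fin L → ℝ,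
      (∀ i, 0 ≤ ε i ∧ ε i ≤ δ) ∧
      (∀ i j : Fin L, i ≠ j → R i i + ε i ≠ R j j + ε j) ∧
      ∃ c : Fin L → ℝ, ∀ t : ℕ, 1 ≤ t →
        e ⬝ᵥ ((R ^ t) *ᵥ p0) ≤ ∑ i, c i * (R i i + ε i) ^ t := by
  intro δ hδ
  set Bad : Finset ℝ :=
    Finset.univ.offDiag.image
      (fun p : Fin L × Fin L => (R p.2 p.2 - R p.1 p.1) / ((p.1 : ℝ) - (p.2 : ℝ))) with hBad
  have hLpos : (0 : ℝ) < L := by exact_mod_cast hL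
  have hIoc : (Set.Ioc (0:ℝ) (δ / L)).Infinite := Set.Ioc_infinite (by positivity)
  obtain ⟨s, hs⟩ := (hIoc.diff (Bad.finite_toSet)).nonempty
  obtain ⟨⟨hs0, hsδ⟩, hsBad⟩ := hs
  refine ⟨fun i => s * ((i : ℕ) + 1), ?_, ?_, ?_⟩
  · intro i
    constructor
    · positivity
    · have h1 : ((i : ℕ) : ℝ) + 1 ≤ L := by
        have := i.isLt; exact_mod_cast Nat.succ_le_of_lt this
      calc s * ((i : ℕ) + 1) ≤ (δ / L) * L := by
            apply mul_le_mul hsδ h1 (by positivity) (le_of_lt (by positivity))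
        _ = δ := by field_simp
  · intro i j hij heq
    apply hsBad
    simp only [hBad, Finset.coe_image, Set.mem_image, Finset.mem_coe, Finset.mem_offDiag]
    refine ⟨(i, j), ⟨Finset.mem_univ _, Finset.mem_univ _, hij⟩, ?_⟩
    have hij' : ((i : ℕ) : ℝ) ≠ ((j : ℕ) : ℝ) := by
      exact_mod_cast fun h => hij (Fin.ext (by exact_mod_cast h))
    rw [div_eq_iff (sub_ne_zero.mpr hij')]
    simp only at heq
    ring_nf
    ring_nf at heq
    linarith
  · -- construct the coefficients
    obtain ⟨i₀, -, hmax⟩ := Finset.exists_max_image Finset.univ (fun i => R i i)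
      ⟨⟨0, hL⟩, Finset.mem_univ _⟩
    set l := R i₀ i₀ with hl
    have hl0 : 0 ≤ l := hRnn i₀ i₀
    set εs : ℝ := s * ((i₀ : ℕ) + 1) with hεs
    have hεs0 : 0 < εs := by positivity
    set N : Matrix (Fin L) (Fin L) ℝ := Matrix.of (fun i j => if i < j then R i j else 0) with hN
    have hNnn : ∀ i j, 0 ≤ N i j := by
      intro i j; simp only [hN, Matrix.of_apply]; split
      exacts [hRnn i j, le_refl 0]
    have hNtri : ∀ i j : Fin L, ¬ i < j → N i j = 0 := by
      intro i j h; simp [hN, h]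
    set M : ℕ → ℝ := fun k => e ⬝ᵥ ((N ^ k) *ᵥ p0) with hM
    have hMnn : ∀ k, 0 ≤ M k := by
      intro k
      rw [hM]
      simp only [dotProduct, Matrix.mulVec]
      refine Finset.sum_nonneg fun i _ => mul_nonneg (he i) ?_
      refine Finset.sum_nonneg fun j _ => ?_
      exact mul_nonneg (pow_mono_nonneg N N hNnn (fun _ _ => le_refl _) k i j).1 (hp0 j)
    have hM0 : ∀ k, L ≤ k → M k = 0 := by
      intro k hk
      have hz : (N ^ k) = 0 := by
        ext i j
        exact strict_pow_apply N hNtri k i j (by have := j.isLt; omega)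
      simp [hM, hz]
    refine ⟨fun j => if j = i₀ then ∑ k ∈ Finset.range L, M k * (εs⁻¹) ^ k else 0, ?_⟩
    intro t ht
    set B : Matrix (Fin L) (Fin L) ℝ := l • 1 + N with hB
    have hRB : ∀ i j, R i j ≤ B i j := by
      intro i j
      simp only [hB, Matrix.add_apply, Matrix.smul_apply, Matrix.one_apply, hN,
        Matrix.of_apply, smul_eq_mul]
      rcases lt_trichotomy i j with h | h | h
      · rw [if_neg (ne_of_lt h), if_pos h]; linarith
      · subst h; rw [if_pos rfl, if_neg (lt_irrefl i)]
        have := hmax i (Finset.mem_univ i); linarith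
      · rw [if_neg (ne_of_gt h), if_neg (not_lt.mpr h.le), hRtri i j h]; norm_num
    have hkey := pow_mono_nonneg R B hRnn hRB t
    have step1 : e ⬝ᵥ ((R ^ t) *ᵥ p0) ≤ e ⬝ᵥ ((B ^ t) *ᵥ p0) := by
      simp only [dotProduct, Matrix.mulVec]
      refine Finset.sum_le_sum fun i _ => mul_le_mul_of_nonneg_left ?_ (he i)
      exact Finset.sum_le_sum fun j _ => mul_le_mul_of_nonneg_right (hkey i j).2 (hp0 j)
    have step2 : e ⬝ᵥ ((B ^ t) *ᵥ p0)
        = ∑ k ∈ Finset.range (t+1), ((t.choose k : ℝ) * l ^ (t-k)) * M k := by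
      rw [hB, my_binom, my_sum_mulVec]
      simp only [smul_mulVec, dotProduct, Finset.sum_apply, Pi.smul_apply,
        smul_eq_mul, Finset.mul_sum, hM]
      rw [Finset.sum_comm]
      refine Finset.sum_congr rfl fun k _ => ?_
      exact Finset.sum_congr rfl fun i _ => by ring
    have hbin : ∀ k ∈ Finset.range (t+1),
        (t.choose k : ℝ) * l ^ (t-k) * εs ^ k ≤ (l + εs) ^ t := by
      intro k hk
      rw [Finset.mem_range] at hk
      have hk' : k ≤ t := by omega
      rw [add_pow]
      have hmem : t - k ∈ Finset.range (t+1) := by rw [Finset.mem_range]; omega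
      have hle := Finset.single_le_sum
        (f := fun m => l ^ m * εs ^ (t - m) * (t.choose m : ℝ))
        (fun m _ => by positivity) hmem
      calc (t.choose k : ℝ) * l ^ (t-k) * εs ^ k
          = l ^ (t-k) * εs ^ (t - (t-k)) * (t.choose (t-k) : ℝ) := by
            rw [Nat.sub_sub_self hk', Nat.choose_symm hk']; ring
        _ ≤ _ := hle
    have step3 : ∀ k ∈ Finset.range (t+1),
        ((t.choose k : ℝ) * l ^ (t-k)) * M k
          ≤ (if k < L then M k * (εs⁻¹)^k else 0) * (l+εs)^t := by
      intro k hk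
      by_cases hkL : k < L
      · rw [if_pos hkL]
        have h1 : (t.choose k : ℝ) * l ^ (t-k) ≤ (εs⁻¹)^k * (l+εs)^t := by
          have h2 : (t.choose k : ℝ) * l ^ (t-k)
              = ((t.choose k : ℝ) * l ^ (t-k) * εs ^ k) * (εs⁻¹)^k := by
            rw [mul_assoc ((t.choose k : ℝ) * l ^ (t-k)), ← mul_pow,
              mul_inv_cancel₀ hεs0.ne', one_pow, mul_one]
          rw [h2, mul_comm ((εs⁻¹)^k)]
          exact mul_le_mul_of_nonneg_right (hbin k hk) (by positivity)
        calc ((t.choose k : ℝ) * l ^ (t-k)) * M k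
            ≤ ((εs⁻¹)^k * (l+εs)^t) * M k := mul_le_mul_of_nonneg_right h1 (hMnn k)
          _ = M k * (εs⁻¹)^k * (l+εs)^t := by ring
      · rw [if_neg hkL, hM0 k (by omega), mul_zero, zero_mul]
    have step4 : ∑ k ∈ Finset.range (t+1), (if k < L then M k * (εs⁻¹)^k else 0)
        ≤ ∑ k ∈ Finset.range L, M k * (εs⁻¹)^k := by
      have hsub : ∑ k ∈ Finset.range (t+1), (if k < L then M k * (εs⁻¹)^k else 0)
          ≤ ∑ k ∈ Finset.range (t+1+L), (if k < L then M k * (εs⁻¹)^k else 0) := by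
        apply Finset.sum_le_sum_of_subset_of_nonneg (Finset.range_subset_range.mpr (by omega))
        intro k _ _
        split
        · exact mul_nonneg (hMnn k) (by positivity)
        · exact le_refl 0
      have heq : ∑ k ∈ Finset.range (t+1+L), (if k < L then M k * (εs⁻¹)^k else 0)
          = ∑ k ∈ Finset.range L, M k * (εs⁻¹)^k := by
        rw [← Finset.sum_subset (Finset.range_subset_range.mpr (by omega : L ≤ t+1+L))
          (fun k _ hk => if_neg (by rw [Finset.mem_range] at hk; omega))]
        exact Finset.sum_congr rfl fun k hk => if_pos (Finset.mem_range.mp hk)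
      linarith
    have hfin : ∑ i, (if i = i₀ then ∑ k ∈ Finset.range L, M k * (εs⁻¹) ^ k else 0)
          * (R i i + s * ((i : ℕ) + 1)) ^ t
        = (∑ k ∈ Finset.range L, M k * (εs⁻¹)^k) * (l + εs)^t := by
      rw [Finset.sum_eq_single i₀]
      · rw [if_pos rfl]
      · intro b _ hb; rw [if_neg hb, zero_mul]
      · intro h; exact absurd (Finset.mem_univ i₀) h
    calc e ⬝ᵥ ((R ^ t) *ᵥ p0) ≤ e ⬝ᵥ ((B ^ t) *ᵥ p0) := step1
      _ = ∑ k ∈ Finset.range (t+1), ((t.choose k : ℝ) * l ^ (t-k)) * M k := step2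
      _ ≤ ∑ k ∈ Finset.range (t+1), (if k < L then M k * (εs⁻¹)^k else 0) * (l+εs)^t :=
          Finset.sum_le_sum step3
      _ = (∑ k ∈ Finset.range (t+1), (if k < L then M k * (εs⁻¹)^k else 0)) * (l+εs)^t := by
          rw [Finset.sum_mul]
      _ ≤ (∑ k ∈ Finset.range L, M k * (εs⁻¹)^k) * (l+εs)^t :=
          mul_le_mul_of_nonneg_right step4 (by positivity)
      _ = ∑ i, (if i = i₀ then ∑ k ∈ Finset.range L, M k * (εs⁻¹) ^ k else 0)
          * (R i i + s * ((i : ℕ) + 1)) ^ t := hfin.symm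
end

section
/- Let L ≥ 1 and let R and R' be L×L real matrices with nonnegative entries such that T̂ (R')ᵗ ≥ T̂ Rᵗ entrywise for every t ≥ 0 (i.e., R' ⪰ R). Let e = (e_1,…,e_L)ᵀ satisfy 0 < e_1 ≤ e_2 ≤ … ≤ e_L, and assume each column of R' sums to at most 1. For i ∈ {1,…,L} define the drift Δe'(i) := e_i − Σ_{j=1}^{L} r'_{j,i} e_j, and assume ρ' := min_{1 ≤ i ≤ L} Δe'(i)/e_i > 0. Then for every entrywise nonnegative p⁰ ∈ ℝᴸ and every t ≥ 0, eᵀ Rᵗ p⁰ ≤ (1 − ρ')ᵗ · eᵀ p⁰. -/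
open Matrix

/-- convergence-rate bound via a slower auxiliary matrix `R'`. -/
theorem stmt_13 (L : ℕ) (hL : 1 ≤ L)
    (R R' : Matrix (Fin L) (Fin L) ℝ)
    (hRnn : ∀ i j, 0 ≤ R i j) (hR'nn : ∀ i j, 0 ≤ R' i j)
    (Th : Matrix (Fin L) (Fin L) ℝ)
    (hTh : ∀ i j : Fin L, Th i j = if i ≤ j then 1 else 0)
    (hslow : ∀ t : ℕ, ∀ i j, (Th * R ^ t) i j ≤ (Th * R' ^ t) i j)
    (e : Fin L → ℝ) (hepos : ∀ i, 0 < e i)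
    (hemono : ∀ i j : Fin L, i ≤ j → e i ≤ e j)
    (hcol : ∀ j, ∑ i, R' i j ≤ 1)
    (Δe' : Fin L → ℝ) (hΔ : ∀ i, Δe' i = e i - ∑ j, R' j i * e j)
    (ρ' : ℝ)
    (hρ' : ρ' = Finset.univ.inf' (Finset.univ_nonempty_iff.mpr ⟨(⟨0, hL⟩ : Fin L)⟩)
      (fun i => Δe' i / e i))
    (hρpos : 0 < ρ') :
    ∀ p0 : Fin L → ℝ, (∀ i, 0 ≤ p0 i) → ∀ t : ℕ,
      e ⬝ᵥ ((R ^ t) *ᵥ p0) ≤ (1 - ρ') ^ t * (e ⬝ᵥ p0) := by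
  intro p0 hp0 t
  -- column bound: ∑ j, R' j i * e j ≤ (1-ρ') * e i
  have hcolbd : ∀ i, ∑ j, R' j i * e j ≤ (1 - ρ') * e i := by
    intro i
    have h1 : ρ' ≤ Δe' i / e i := by
      rw [hρ']
      exact Finset.inf'_le _ (Finset.mem_univ i)
    have h2 : ρ' * e i ≤ Δe' i := by
      rw [le_div_iff₀ (hepos i)] at h1
      exact h1
    rw [hΔ] at h2
    nlinarith
  -- 1 - ρ' ≥ 0
  have hρle : 0 ≤ 1 - ρ' := by
    have i0 : Fin L := ⟨0, hL⟩
    have hnn : 0 ≤ ∑ j, R' j i0 * e j :=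
      Finset.sum_nonneg fun j _ => mul_nonneg (hR'nn j i0) (hepos j).le
    have := hcolbd i0
    nlinarith [hepos i0]
  -- difference vector d
  set F : ℕ → ℝ := fun n => if h : 0 < n ∧ n ≤ L then e ⟨n - 1, by omega⟩ else 0 with hF
  set d : Fin L → ℝ := fun i => F ((i : ℕ) + 1) - F (i : ℕ) with hd
  have hF1 : ∀ i : Fin L, F ((i : ℕ) + 1) = e i := by
    intro i
    have h : 0 < (i : ℕ) + 1 ∧ (i : ℕ) + 1 ≤ L := ⟨Nat.succ_pos _, i.isLt⟩
    simp only [hF, dif_pos h]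
    congr 1
  have hdnn : ∀ i, 0 ≤ d i := by
    intro i
    simp only [hd, hF1, sub_nonneg]
    by_cases h0 : (i : ℕ) = 0
    · simp only [hF, h0]
      rw [dif_neg (by omega)]
      exact (hepos i).le
    · have h : 0 < (i : ℕ) ∧ (i : ℕ) ≤ L := ⟨Nat.pos_of_ne_zero h0, i.isLt.le⟩
      simp only [hF, dif_pos h]
      exact hemono _ _ (by simpa [Fin.le_def] using Nat.sub_le (i : ℕ) 1)
  have hsum : d ᵥ* Th = e := by
    funext j
    have : (d ᵥ* Th) j = ∑ i, d i * Th i j := rfl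
    rw [this]
    have step1 : ∑ i, d i * Th i j = ∑ i : Fin L, if (i : ℕ) ≤ (j : ℕ) then F ((i:ℕ)+1) - F (i:ℕ) else 0 := by
      apply Finset.sum_congr rfl
      intro i _
      rw [hTh]
      by_cases h : i ≤ j
      · rw [if_pos h, if_pos (Fin.le_def.mp h), mul_one]
      · rw [if_neg h, if_neg (fun hc => h (Fin.le_def.mpr hc)), mul_zero]
    rw [step1, Fin.sum_univ_eq_sum_range (fun k => if k ≤ (j : ℕ) then F (k+1) - F k else 0)]
    rw [← Finset.sum_filter]
    have hfil : (Finset.range L).filter (fun k => k ≤ (j : ℕ)) = Finset.range ((j : ℕ) + 1) := by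
      ext k
      simp only [Finset.mem_filter, Finset.mem_range]
      have := j.isLt
      omega
    rw [hfil, Finset.sum_range_sub F, hF1 j]
    simp [hF]
  -- compare R and R' via d
  have hcompare : e ⬝ᵥ ((R ^ t) *ᵥ p0) ≤ e ⬝ᵥ ((R' ^ t) *ᵥ p0) := by
    rw [dotProduct_mulVec, dotProduct_mulVec, ← hsum, vecMul_vecMul, vecMul_vecMul]
    simp only [Matrix.vecMul, dotProduct]
    apply Finset.sum_le_sum
    intro j _
    apply mul_le_mul_of_nonneg_right _ (hp0 j)
    apply Finset.sum_le_sum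
    intro k _
    exact mul_le_mul_of_nonneg_left (hslow t k j) (hdnn k)
  -- contraction for R'
  have hpow : ∀ s : ℕ, ∀ i j, 0 ≤ (R' ^ s) i j := by
    intro s
    induction s with
    | zero =>
      intro i j
      rw [pow_zero, Matrix.one_apply]
      split <;> norm_num
    | succ s ih =>
      intro i j
      rw [pow_succ, Matrix.mul_apply]
      exact Finset.sum_nonneg fun k _ => mul_nonneg (ih i k) (hR'nn k j)
  have hstep : ∀ w : Fin L → ℝ, (∀ i, 0 ≤ w i) →
      e ⬝ᵥ (R' *ᵥ w) ≤ (1 - ρ') * (e ⬝ᵥ w) := by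
    intro w hw
    rw [dotProduct_mulVec]
    have : (1 - ρ') * (e ⬝ᵥ w) = ∑ j, ((1 - ρ') * e j) * w j := by
      simp only [dotProduct, Finset.mul_sum]
      exact Finset.sum_congr rfl fun j _ => by ring
    rw [this]
    apply Finset.sum_le_sum
    intro j _
    apply mul_le_mul_of_nonneg_right _ (hw j)
    calc (e ᵥ* R') j = ∑ i, R' i j * e i := by
          simp only [Matrix.vecMul, dotProduct]
          exact Finset.sum_congr rfl fun i _ => mul_comm _ _
      _ ≤ (1 - ρ') * e j := hcolbd j
  have hcontr : ∀ s : ℕ, e ⬝ᵥ ((R' ^ s) *ᵥ p0) ≤ (1 - ρ') ^ s * (e ⬝ᵥ p0) := by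
    intro s
    induction s with
    | zero => simp
    | succ s ih =>
      have hw : ∀ i, 0 ≤ ((R' ^ s) *ᵥ p0) i := by
        intro i
        simp only [Matrix.mulVec, dotProduct]
        exact Finset.sum_nonneg fun j _ => mul_nonneg (hpow s i j) (hp0 j)
      have h1 : e ⬝ᵥ ((R' ^ (s+1)) *ᵥ p0) = e ⬝ᵥ (R' *ᵥ ((R' ^ s) *ᵥ p0)) := by
        rw [pow_succ', Matrix.mulVec_mulVec]
      rw [h1]
      calc e ⬝ᵥ (R' *ᵥ ((R' ^ s) *ᵥ p0)) ≤ (1 - ρ') * (e ⬝ᵥ ((R' ^ s) *ᵥ p0)) :=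
            hstep _ hw
        _ ≤ (1 - ρ') * ((1 - ρ') ^ s * (e ⬝ᵥ p0)) := mul_le_mul_of_nonneg_left ih hρle
        _ = (1 - ρ') ^ (s+1) * (e ⬝ᵥ p0) := by ring
  calc e ⬝ᵥ ((R ^ t) *ᵥ p0) ≤ e ⬝ᵥ ((R' ^ t) *ᵥ p0) := hcompare
    _ ≤ (1 - ρ') ^ t * (e ⬝ᵥ p0) := hcontr t
end

section
/- Let n ≥ 1 and L ≥ 1, and let P = [p_{i,j}] (i,j ∈ {0,1,…,L}) be a column-stochastic real matrix with p_{0,0} = 1. Let e_0 = 0 and let e_1,…,e_L be error values that are positive integers with e_j ≤ n for every j ∈ {1,…,L}. Assume the chain is elitist, i.e., p_{i,j} = 0 whenever e_i > e_j, and assume for every j ∈ {1,…,L} that Σ_{i : e_i < e_j} p_{i,j} ≥ (1/n)(1 − 1/n)^{n−1}. Let R = [p_{i,j}]_{i,j=1,…,L} and let p⁰ ∈ ℝᴸ be entrywise nonnegative with Σ_i p⁰_i ≤ 1. Then for every t ≥ 0, eᵀ Rᵗ p⁰ ≤ (1 − 1/(e·n²))ᵗ · eᵀ p⁰, where e in the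 base denotes Euler's number. -/
open Matrix

/-- abstract LeadingOnes analysis: for an elitist chain with
integer error values in `{1,…,n}` and improvement probability at least
`(1/n)(1-1/n)^{n-1}`, the error satisfies `e^{[t]} ≤ (1 - 1/(e·n²))ᵗ e^{[0]}`. -/
theorem stmt_16 (n L : ℕ) (hn : 1 ≤ n) (hL : 1 ≤ L)
    (P : Matrix (Fin (L + 1)) (Fin (L + 1)) ℝ)
    (hPnn : ∀ i j, 0 ≤ P i j) (hPcol : ∀ j, ∑ i, P i j = 1) (hP00 : P 0 0 = 1)
    (e : Fin (L + 1) → ℝ) (he0 : e 0 = 0)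
    (heint : ∀ j : Fin L, ∃ m : ℕ, 0 < m ∧ m ≤ n ∧ e j.succ = m)
    (helitist : ∀ i j : Fin (L + 1), e j < e i → P i j = 0)
    (himp : ∀ j : Fin L,
      (1 / (n : ℝ)) * (1 - 1 / (n : ℝ)) ^ (n - 1)
        ≤ ∑ i ∈ Finset.univ.filter (fun i : Fin (L + 1) => e i < e j.succ),
            P i j.succ)
    (R : Matrix (Fin L) (Fin L) ℝ) (hR : ∀ i j : Fin L, R i j = P i.succ j.succ)
    (p0 : Fin L → ℝ) (hp0 : ∀ i, 0 ≤ p0 i) (hp0sum : ∑ i, p0 i ≤ 1) :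
    ∀ t : ℕ, (fun i : Fin L => e i.succ) ⬝ᵥ ((R ^ t) *ᵥ p0)
      ≤ (1 - 1 / (Real.exp 1 * (n : ℝ) ^ 2)) ^ t
          * ((fun i : Fin L => e i.succ) ⬝ᵥ p0) := by
  classical
  set δ : ℝ := 1 / (Real.exp 1 * (n : ℝ) ^ 2) with hδ
  have hn1 : (1:ℝ) ≤ (n:ℝ) := by exact_mod_cast hn
  have hnpos : (0:ℝ) < (n:ℝ) := by linarith
  -- exp bound
  have hexp : Real.exp (-1) ≤ (1 - 1/(n:ℝ)) ^ (n-1) := by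
    rcases Nat.eq_or_lt_of_le hn with h | h
    · simp [← h]
    · set k : ℕ := n - 1 with hk
      have hk1 : 1 ≤ k := by omega
      have hkR : (0:ℝ) < (k:ℝ) := by exact_mod_cast hk1
      have hkn : (k:ℝ) + 1 = (n:ℝ) := by
        have : k + 1 = n := by omega
        exact_mod_cast this
      have h1 : Real.exp (-(1/(k:ℝ))) ≤ 1 - 1/(n:ℝ) := by
        have h2 : 1/(k:ℝ) + 1 ≤ Real.exp (1/(k:ℝ)) := Real.add_one_le_exp _
        have h3 : Real.exp (-(1/(k:ℝ))) = (Real.exp (1/(k:ℝ)))⁻¹ := by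
          rw [Real.exp_neg]
        rw [h3]
        have h4 : (Real.exp (1/(k:ℝ)))⁻¹ ≤ (1/(k:ℝ) + 1)⁻¹ := by
          apply inv_anti₀ (by positivity) h2
        have heq : (1/(k:ℝ) + 1)⁻¹ = 1 - 1/(n:ℝ) := by
          rw [← hkn]
          have hk0 : (k:ℝ) ≠ 0 := ne_of_gt hkR
          have hk10 : (k:ℝ) + 1 ≠ 0 := by positivity
          field_simp
          ring
        exact h4.trans heq.le
      calc Real.exp (-1) = Real.exp (-(1/(k:ℝ))) ^ k := by
            rw [← Real.exp_nat_mul]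
            congr 1
            field_simp
        _ ≤ (1 - 1/(n:ℝ)) ^ k := by
            apply pow_le_pow_left₀ (Real.exp_nonneg _) h1
  have hδpos : 0 < δ := by
    rw [hδ]; positivity
  have hδ1 : δ ≤ 1 := by
    rw [hδ, div_le_one (by positivity)]
    nlinarith [Real.add_one_le_exp (1:ℝ)]
  -- integer values
  have hevals : ∀ i : Fin (L+1), ∃ k : ℕ, e i = k ∧ k ≤ n := by
    intro i
    refine Fin.cases ?_ ?_ i
    · exact ⟨0, by simpa using he0, Nat.zero_le n⟩
    · intro j
      obtain ⟨m, hm0, hmn, hem⟩ := heint j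
      exact ⟨m, hem, hmn⟩
  -- column bound over the full matrix
  have hcol : ∀ j : Fin L, ∑ i, e i * P i j.succ ≤ (1 - δ) * e j.succ := by
    intro j
    obtain ⟨m, hm0, hmn, hem⟩ := heint j
    set S : Finset (Fin (L+1)) := Finset.univ.filter (fun i => e i < e j.succ) with hSdef
    set s : ℝ := ∑ i ∈ S, P i j.succ with hs
    have hsplit : ∑ i ∈ S, e i * P i j.succ + ∑ i ∈ Sᶜ, e i * P i j.succ
        = ∑ i, e i * P i j.succ := Finset.sum_add_sum_compl S _
    have hsc : s + ∑ i ∈ Sᶜ, P i j.succ = 1 := by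
      rw [hs, Finset.sum_add_sum_compl S _]; exact hPcol j.succ
    -- bound on S
    have hbS : ∑ i ∈ S, e i * P i j.succ ≤ (e j.succ - 1) * s := by
      rw [hs, Finset.mul_sum]
      apply Finset.sum_le_sum
      intro i hi
      have hiS : e i < e j.succ := by
        rw [hSdef] at hi
        exact (Finset.mem_filter.1 hi).2
      obtain ⟨k, hek, hkn⟩ := hevals i
      have : (k:ℝ) < (m:ℝ) := by rw [← hek, ← hem]; exact hiS
      have hkm : k < m := by exact_mod_cast this
      have : e i ≤ e j.succ - 1 := by
        rw [hek, hem]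
        have : (k:ℝ) + 1 ≤ (m:ℝ) := by exact_mod_cast hkm
        linarith
      exact mul_le_mul_of_nonneg_right this (hPnn i j.succ)
    -- equality on complement
    have hbSc : ∑ i ∈ Sᶜ, e i * P i j.succ = e j.succ * ∑ i ∈ Sᶜ, P i j.succ := by
      rw [Finset.mul_sum]
      apply Finset.sum_congr rfl
      intro i hi
      have hiS : ¬ (e i < e j.succ) := by
        rw [Finset.mem_compl, hSdef, Finset.mem_filter] at hi
        intro h; exact hi ⟨Finset.mem_univ i, h⟩
      rcases lt_trichotomy (e i) (e j.succ) with h | h | h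
      · exact absurd h hiS
      · rw [h]
      · rw [helitist i j.succ h]; ring
    have himpj := himp j
    have hcs : (1/(n:ℝ)) * (1 - 1/(n:ℝ))^(n-1) ≤ s := himpj
    have hδm : δ * e j.succ ≤ s := by
      have h1 : δ * e j.succ ≤ δ * n := by
        apply mul_le_mul_of_nonneg_left _ hδpos.le
        rw [hem]; exact_mod_cast hmn
      have h2 : δ * (n:ℝ) ≤ (1/(n:ℝ)) * (1 - 1/(n:ℝ))^(n-1) := by
        have hinv : (Real.exp 1)⁻¹ ≤ (1 - 1/(n:ℝ))^(n-1) := by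
          simpa [Real.exp_neg] using hexp
        have hEpos : (0:ℝ) < Real.exp 1 := Real.exp_pos 1
        have heq : δ * (n:ℝ) = (1/(n:ℝ)) * (Real.exp 1)⁻¹ := by
          rw [hδ]; field_simp
        rw [heq]
        exact mul_le_mul_of_nonneg_left hinv (by positivity)
      linarith
    have key : ∑ i, e i * P i j.succ ≤ e j.succ - s := by
      rw [← hsplit, hbSc]
      have h1 : ∑ i ∈ Sᶜ, P i j.succ = 1 - s := by linarith
      rw [h1]
      nlinarith [hbS]
    have : e j.succ - s ≤ (1 - δ) * e j.succ := by nlinarith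
    linarith
  -- step lemma
  have hstep : ∀ q : Fin L → ℝ, (∀ i, 0 ≤ q i) →
      (fun i : Fin L => e i.succ) ⬝ᵥ (R *ᵥ q)
        ≤ (1 - δ) * ((fun i : Fin L => e i.succ) ⬝ᵥ q) := by
    intro q hq
    have h1 : (fun i : Fin L => e i.succ) ⬝ᵥ (R *ᵥ q)
        = ∑ j, (∑ i : Fin L, e i.succ * R i j) * q j := by
      simp only [dotProduct, mulVec, Finset.mul_sum, Finset.sum_mul]
      rw [Finset.sum_comm]
      apply Finset.sum_congr rfl; intro j _
      apply Finset.sum_congr rfl; intro i _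
      ring
    rw [h1]
    have h2 : ∀ j : Fin L, ∑ i : Fin L, e i.succ * R i j
        = ∑ i, e i * P i j.succ := by
      intro j
      rw [Fin.sum_univ_succ, he0]
      simp only [hR]
      ring_nf
    have h3 : ∑ j, (∑ i : Fin L, e i.succ * R i j) * q j
        ≤ ∑ j, ((1 - δ) * e j.succ) * q j := by
      apply Finset.sum_le_sum
      intro j _
      apply mul_le_mul_of_nonneg_right _ (hq j)
      rw [h2 j]; exact hcol j
    refine h3.trans_eq ?_
    simp only [dotProduct, Finset.mul_sum]
    apply Finset.sum_congr rfl; intro j _; ring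
  -- nonnegativity of iterates
  have hnn : ∀ t : ℕ, ∀ i, 0 ≤ ((R ^ t) *ᵥ p0) i := by
    intro t
    induction t with
    | zero => simpa using hp0
    | succ t ih =>
      intro i
      rw [pow_succ', ← Matrix.mulVec_mulVec]
      simp only [Matrix.mulVec, dotProduct]
      apply Finset.sum_nonneg
      intro j _
      exact mul_nonneg (by rw [hR]; exact hPnn _ _) (ih j)
  -- main induction
  intro t
  induction t with
  | zero => simp
  | succ t ih =>
    have h1δ : (0:ℝ) ≤ 1 - δ := by linarith
    calc (fun i : Fin L => e i.succ) ⬝ᵥ ((R ^ (t+1)) *ᵥ p0)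
        = (fun i : Fin L => e i.succ) ⬝ᵥ (R *ᵥ ((R ^ t) *ᵥ p0)) := by
          rw [pow_succ', ← Matrix.mulVec_mulVec]
      _ ≤ (1 - δ) * ((fun i : Fin L => e i.succ) ⬝ᵥ ((R ^ t) *ᵥ p0)) :=
          hstep _ (hnn t)
      _ ≤ (1 - δ) * ((1 - δ) ^ t * ((fun i : Fin L => e i.succ) ⬝ᵥ p0)) :=
          mul_le_mul_of_nonneg_left ih h1δ
      _ = (1 - δ) ^ (t+1) * ((fun i : Fin L => e i.succ) ⬝ᵥ p0) := by ring
end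

section
/- Let n ≥ 1 and L ≥ 1, and let P = [p_{i,j}] (i,j ∈ {0,1,…,L}) be a column-stochastic real matrix with p_{0,0} = 1. Let e_0 = 0 and e_1,…,e_L > 0, and assume that for every j ∈ {1,…,L} the drift satisfies Σ_{k=0}^{L} p_{k,j}(e_j − e_k) ≥ (e_j/n)(1 − 1/n)^{n−1}. Let R = [p_{i,j}]_{i,j=1,…,L} and let p⁰ ∈ ℝᴸ be entrywise nonnegative with Σ_i p⁰_i ≤ 1. Then for every t ≥ 0, eᵀ Rᵗ p⁰ ≤ (1 − 1/(e·n))ᵗ · eᵀ p⁰, where e in the base denotes Euler's number. -/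
open Matrix

lemma exp_neg_one_le_pow (n : ℕ) (hn : 1 ≤ n) :
    Real.exp (-1) ≤ (1 - 1 / (n : ℝ)) ^ (n - 1) := by
  rcases eq_or_lt_of_le hn with h1 | h2
  · rw [← h1]
    simp [Real.exp_le_one_iff.mpr (by norm_num : (-1:ℝ) ≤ 0)]
  · set m : ℕ := n - 1 with hm
    have hm1 : 1 ≤ m := by omega
    have hmn : (n : ℝ) = (m : ℝ) + 1 := by
      have : n = m + 1 := by omega
      rw [this]; push_cast; ring
    have hmpos : (0:ℝ) < (m : ℝ) := by exact_mod_cast hm1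
    have h1 : (1:ℝ) - 1 / n = (m : ℝ) / ((m:ℝ) + 1) := by
      rw [hmn]; field_simp; ring
    have hexp : Real.exp (-1) = (Real.exp (-(1 / (m:ℝ)))) ^ m := by
      rw [← Real.exp_nat_mul]
      congr 1
      field_simp
    rw [h1, hexp]
    apply pow_le_pow_left₀ (Real.exp_nonneg _)
    have hle : 1 / (m:ℝ) + 1 ≤ Real.exp (1 / (m:ℝ)) := Real.add_one_le_exp _
    rw [Real.exp_neg]
    have hE := Real.exp_pos (1 / (m:ℝ))
    rw [inv_le_comm₀ hE (by positivity)]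
    have : ((m:ℝ) / ((m:ℝ) + 1))⁻¹ = 1 / (m:ℝ) + 1 := by field_simp; ring
    rw [this]; exact hle

/-- abstract OneMax analysis: if the drift at every non-optimal
state `j` is at least `(e_j/n)(1-1/n)^{n-1}`, then the error satisfies
`e^{[t]} ≤ (1 - 1/(e·n))ᵗ e^{[0]}`. -/
theorem stmt_17 (n L : ℕ) (hn : 1 ≤ n) (hL : 1 ≤ L)
    (P : Matrix (Fin (L + 1)) (Fin (L + 1)) ℝ)
    (hPnn : ∀ i j, 0 ≤ P i j) (hPcol : ∀ j, ∑ i, P i j = 1) (hP00 : P 0 0 = 1)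
    (e : Fin (L + 1) → ℝ) (he0 : e 0 = 0) (hepos : ∀ j : Fin L, 0 < e j.succ)
    (hdrift : ∀ j : Fin L,
      (e j.succ / (n : ℝ)) * (1 - 1 / (n : ℝ)) ^ (n - 1)
        ≤ ∑ k, P k j.succ * (e j.succ - e k))
    (R : Matrix (Fin L) (Fin L) ℝ) (hR : ∀ i j : Fin L, R i j = P i.succ j.succ)
    (p0 : Fin L → ℝ) (hp0 : ∀ i, 0 ≤ p0 i) (hp0sum : ∑ i, p0 i ≤ 1) :
    ∀ t : ℕ, (fun i : Fin L => e i.succ) ⬝ᵥ ((R ^ t) *ᵥ p0)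
      ≤ (1 - 1 / (Real.exp 1 * (n : ℝ))) ^ t
          * ((fun i : Fin L => e i.succ) ⬝ᵥ p0) := by
  set c : ℝ := 1 - 1 / (Real.exp 1 * (n : ℝ)) with hc
  have hnpos : (0:ℝ) < (n:ℝ) := by exact_mod_cast hn
  have hcnn : 0 ≤ c := by
    rw [hc]
    have h1 : (1:ℝ) ≤ Real.exp 1 * (n:ℝ) := by
      have : (1:ℝ) ≤ Real.exp 1 := by
        have := Real.add_one_le_exp (1:ℝ); linarith
      have hn1 : (1:ℝ) ≤ (n:ℝ) := by exact_mod_cast hn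
      nlinarith
    have : 1 / (Real.exp 1 * (n:ℝ)) ≤ 1 := by
      rw [div_le_one (by positivity)]; exact h1
    linarith
  -- column bound
  have hcol : ∀ j : Fin L, ∑ i, e i.succ * R i j ≤ c * e j.succ := by
    intro j
    have hd := hdrift j
    have hsplit : ∑ k, P k j.succ * (e j.succ - e k)
        = e j.succ - ∑ k, P k j.succ * e k := by
      rw [show (fun k => P k j.succ * (e j.succ - e k))
          = fun k => P k j.succ * e j.succ - P k j.succ * e k from by
            funext k; ring]
      rw [Finset.sum_sub_distrib, ← Finset.sum_mul, hPcol, one_mul]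
    have hS : ∑ k, P k j.succ * e k
        ≤ e j.succ - (e j.succ / (n : ℝ)) * (1 - 1 / (n : ℝ)) ^ (n - 1) := by
      rw [hsplit] at hd; linarith
    have heq : ∑ i, e i.succ * R i j = ∑ k, P k j.succ * e k := by
      rw [Fin.sum_univ_succ (f := fun k => P k j.succ * e k), he0, mul_zero,
        zero_add]
      apply Finset.sum_congr rfl
      intro i _
      rw [hR]; ring
    rw [heq]
    refine hS.trans ?_
    have hkey : e j.succ * (1 / (Real.exp 1 * (n:ℝ)))
        ≤ (e j.succ / (n : ℝ)) * (1 - 1 / (n : ℝ)) ^ (n - 1) := by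
      have hexp := exp_neg_one_le_pow n hn
      rw [Real.exp_neg] at hexp
      have h1 : e j.succ * (1 / (Real.exp 1 * (n:ℝ)))
          = (e j.succ / (n:ℝ)) * (Real.exp 1)⁻¹ := by
        have hE : Real.exp 1 ≠ 0 := (Real.exp_pos 1).ne'
        have hn0 : (n:ℝ) ≠ 0 := hnpos.ne'
        field_simp
      rw [h1]
      exact mul_le_mul_of_nonneg_left hexp
        (div_nonneg (hepos j).le hnpos.le)
    rw [hc]; nlinarith [hkey]
  -- nonnegativity of iterates
  have hnonneg : ∀ t : ℕ, ∀ i, 0 ≤ ((R ^ t) *ᵥ p0) i := by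
    intro t
    induction t with
    | zero => simpa using hp0
    | succ t ih =>
      intro i
      rw [pow_succ', ← mulVec_mulVec, mulVec]
      apply Finset.sum_nonneg
      intro j _
      apply mul_nonneg _ (ih j)
      show 0 ≤ R i j
      rw [hR i j]
      exact hPnn _ _
  -- step bound for nonnegative vectors
  have hstep : ∀ q : Fin L → ℝ, (∀ i, 0 ≤ q i) →
      (fun i : Fin L => e i.succ) ⬝ᵥ (R *ᵥ q)
        ≤ c * ((fun i : Fin L => e i.succ) ⬝ᵥ q) := by
    intro q hq
    have : (fun i : Fin L => e i.succ) ⬝ᵥ (R *ᵥ q)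
        = ∑ j, (∑ i, e i.succ * R i j) * q j := by
      simp only [dotProduct, mulVec, dotProduct, Finset.mul_sum,
        Finset.sum_mul]
      rw [Finset.sum_comm]
      apply Finset.sum_congr rfl; intro j _
      apply Finset.sum_congr rfl; intro i _; ring
    rw [this, dotProduct, Finset.mul_sum]
    apply Finset.sum_le_sum
    intro j _
    rw [← mul_assoc]
    exact mul_le_mul_of_nonneg_right (hcol j) (hq j)
  intro t
  induction t with
  | zero => simp
  | succ t ih =>
    have h1 : (fun i : Fin L => e i.succ) ⬝ᵥ ((R ^ (t+1)) *ᵥ p0)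
        = (fun i : Fin L => e i.succ) ⬝ᵥ (R *ᵥ ((R ^ t) *ᵥ p0)) := by
      rw [pow_succ', mulVec_mulVec]
    rw [h1, pow_succ']
    calc (fun i : Fin L => e i.succ) ⬝ᵥ (R *ᵥ ((R ^ t) *ᵥ p0))
        ≤ c * ((fun i : Fin L => e i.succ) ⬝ᵥ ((R ^ t) *ᵥ p0)) :=
          hstep _ (hnonneg t)
      _ ≤ c * (c ^ t * ((fun i : Fin L => e i.succ) ⬝ᵥ p0)) :=
          mul_le_mul_of_nonneg_left ih hcnn
      _ = c * c ^ t * ((fun i : Fin L => e i.succ) ⬝ᵥ p0) := by ring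
end
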